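/- arXiv:2601.08184 — 3 statements merged into one kernel-verified Lean document; each statement's English description precedes it below -/
import Mathlib

section
/- Let A and B be symmetric positive semidefinite d×d real matrices and p ≥ 1. Then the Wasserstein-p distance between the centered Gaussian measures N(0,A) and N(0,B) on R^d satisfies W_p(N(0,A), N(0,B)) ≤ C_{p,d} * ‖A - B‖_op^{1/2} for a constant C_{p,d} depending only on p and d. -/
open ProbabilityTheory Real

open MeasureTheory
open scoped ENNReal

/-- The Wasserstein-`p` distance between two measures on a normed space, defined as the
infimum over couplings of `(E‖X-Y‖^p)^{1/p}`. -/
noncomputable def wassersteinDist {E : Type*} [NormedAddCommGroup E] [MeasurableSpace E]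
    (p : ℝ) (μ ν : Measure E) : ℝ :=
  sInf {r : ℝ | ∃ γ : Measure (E × E), IsProbabilityMeasure γ ∧
    γ.map Prod.fst = μ ∧ γ.map Prod.snd = ν ∧
    r = (∫ z, ‖z.1 - z.2‖ ^ p ∂γ) ^ (1 / p)}

/-- The standard Gaussian measure `N(0, I_d)` on `R^d`. -/
noncomputable def stdGaussian (d : ℕ) : Measure (EuclideanSpace ℝ (Fin d)) :=
  (Measure.pi fun _ : Fin d => ProbabilityTheory.gaussianReal 0 1).map
    (EuclideanSpace.equiv (Fin d) ℝ).symm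

/-- The centered Gaussian measure `N(0, A)` on `R^d` with positive semidefinite
covariance `A`, realized as the pushforward of the standard Gaussian by `A^{1/2}`. -/
noncomputable def gaussianOf {d : ℕ} {A : Matrix (Fin d) (Fin d) ℝ} (hA : A.PosSemidef) :
    Measure (EuclideanSpace ℝ (Fin d)) :=
  (stdGaussian d).map (Matrix.toEuclideanLin
    ((hA.1.eigenvectorUnitary : Matrix (Fin d) (Fin d) ℝ) *
      Matrix.diagonal ((↑) ∘ (Real.sqrt ·) ∘ hA.1.eigenvalues) *
      (star hA.1.eigenvectorUnitary : Matrix (Fin d) (Fin d) ℝ)))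

section Aux
open Matrix
open scoped RealInnerProductSpace

noncomputable def Matrix.PosSemidef.sqrt {d : ℕ} {A : Matrix (Fin d) (Fin d) ℝ}
    (hA : A.PosSemidef) : Matrix (Fin d) (Fin d) ℝ :=
  (hA.1.eigenvectorUnitary : Matrix (Fin d) (Fin d) ℝ) *
      Matrix.diagonal ((↑) ∘ (Real.sqrt ·) ∘ hA.1.eigenvalues) *
      (star hA.1.eigenvectorUnitary : Matrix (Fin d) (Fin d) ℝ)

lemma Matrix.PosSemidef.posSemidef_sqrt {d : ℕ} {A : Matrix (Fin d) (Fin d) ℝ}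
    (hA : A.PosSemidef) : hA.sqrt.PosSemidef := by
  have hD : (Matrix.diagonal ((↑) ∘ (Real.sqrt ·) ∘ hA.1.eigenvalues) :
      Matrix (Fin d) (Fin d) ℝ).PosSemidef :=
    Matrix.PosSemidef.diagonal (fun i => Real.sqrt_nonneg _)
  have := hD.mul_mul_conjTranspose_same (hA.1.eigenvectorUnitary : Matrix (Fin d) (Fin d) ℝ)
  simpa [Matrix.PosSemidef.sqrt, Matrix.star_eq_conjTranspose, Unitary.coe_star] using this

lemma Matrix.PosSemidef.sqrt_mul_self {d : ℕ} {A : Matrix (Fin d) (Fin d) ℝ}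
    (hA : A.PosSemidef) : hA.sqrt * hA.sqrt = A := by
  set U := (hA.1.eigenvectorUnitary : Matrix (Fin d) (Fin d) ℝ) with hUdef
  set D := (Matrix.diagonal ((↑) ∘ (Real.sqrt ·) ∘ hA.1.eigenvalues) :
      Matrix (Fin d) (Fin d) ℝ) with hDdef
  have hU : star U * U = 1 := Unitary.star_mul_self_of_mem hA.1.eigenvectorUnitary.2
  have hspec := hA.1.spectral_theorem
  rw [Unitary.conjStarAlgAut_apply] at hspec
  have hsq : hA.sqrt = U * D * star U := by
    simp [Matrix.PosSemidef.sqrt, U, D, Unitary.coe_star]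
  rw [hsq]
  calc U * D * star U * (U * D * star U) = U * D * (star U * U) * D * star U := by
        simp only [mul_assoc]
    _ = U * (D * D) * star U := by rw [hU]; simp only [mul_one, mul_assoc]
    _ = A := by
        rw [hDdef, diagonal_mul_diagonal]
        conv_rhs => rw [hspec]
        congr 2
        · congr 1
          funext i
          simp [Real.mul_self_sqrt (hA.eigenvalues_nonneg i)]

lemma eig_bound {d : ℕ} {S T : Matrix (Fin d) (Fin d) ℝ} (hS : S.PosSemidef)
    (hT : T.PosSemidef) {v : Fin d → ℝ} {l : ℝ} (hl : 0 ≤ l)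
    (hv : (S - T) *ᵥ v = l • v) :
    l ^ 2 * (v ⬝ᵥ v) ≤ v ⬝ᵥ ((S * S - T * T) *ᵥ v) := by
  have hstar : star v = v := by funext j; simp
  have key : S * S - T * T = S * (S - T) + (S - T) * T := by noncomm_ring
  have h1 : v ⬝ᵥ ((S * (S - T)) *ᵥ v) = l * (v ⬝ᵥ (S *ᵥ v)) := by
    rw [← mulVec_mulVec, hv, mulVec_smul, dotProduct_smul]
    rfl
  have h2 : v ⬝ᵥ (((S - T) * T) *ᵥ v) = l * (v ⬝ᵥ (T *ᵥ v)) := by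
    rw [← mulVec_mulVec, dotProduct_mulVec]
    have : v ᵥ* (S - T) = l • v := by
      have hsym : (S - T)ᴴ = S - T := hS.1.sub hT.1
      rw [← mulVec_transpose]
      rw [show (S - T)ᵀ = S - T from by
        simpa [conjTranspose_eq_transpose_of_trivial] using hsym]
      exact hv
    rw [this, smul_dotProduct]
    rfl
  have hqS : 0 ≤ v ⬝ᵥ (S *ᵥ v) := by simpa [hstar] using hS.dotProduct_mulVec_nonneg v
  have hqT : 0 ≤ v ⬝ᵥ (T *ᵥ v) := by simpa [hstar] using hT.dotProduct_mulVec_nonneg v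
  have hdiff : v ⬝ᵥ (S *ᵥ v) - v ⬝ᵥ (T *ᵥ v) = l * (v ⬝ᵥ v) := by
    have := congrArg (fun w => v ⬝ᵥ w) hv
    simpa [sub_mulVec, dotProduct_sub, dotProduct_smul] using this
  rw [key, add_mulVec, dotProduct_add, h1, h2]
  nlinarith [hqS, hqT, hdiff]

lemma eigenvalue_sq_le {d : ℕ} {A B : Matrix (Fin d) (Fin d) ℝ}
    (hA : A.PosSemidef) (hB : B.PosSemidef)
    (hM : (hA.sqrt - hB.sqrt).IsHermitian) (i : Fin d) :
    hM.eigenvalues i ^ 2 ≤ ‖Matrix.toEuclideanCLM (𝕜 := ℝ) (A - B)‖ := by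
  set S := hA.sqrt
  set T := hB.sqrt
  set e : EuclideanSpace ℝ (Fin d) := hM.eigenvectorBasis i
  set l : ℝ := hM.eigenvalues i
  have hv : (S - T) *ᵥ ⇑e = l • ⇑e := hM.mulVec_eigenvectorBasis i
  have hnorm : ⇑e ⬝ᵥ ⇑e = 1 := by
    have h1 : ⟪e, e⟫ = (1 : ℝ) := by
      rw [real_inner_self_eq_norm_sq, hM.eigenvectorBasis.orthonormal.1 i]
      norm_num
    rw [EuclideanSpace.inner_eq_star_dotProduct] at h1
    simpa using h1
  have habs : ∀ (C : Matrix (Fin d) (Fin d) ℝ), ⇑e ⬝ᵥ (C *ᵥ ⇑e)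
      ≤ ‖Matrix.toEuclideanCLM (𝕜 := ℝ) C‖ := by
    intro C
    have h1 : ⇑e ⬝ᵥ (C *ᵥ ⇑e) = ⟪e, Matrix.toEuclideanCLM (𝕜 := ℝ) C e⟫ := by
      rw [dotProduct_comm, EuclideanSpace.inner_eq_star_dotProduct]
      simp [Matrix.ofLp_toEuclideanCLM]
    rw [h1]
    calc ⟪e, Matrix.toEuclideanCLM (𝕜 := ℝ) C e⟫
        ≤ ‖e‖ * ‖Matrix.toEuclideanCLM (𝕜 := ℝ) C e‖ := real_inner_le_norm _ _
      _ ≤ ‖e‖ * (‖Matrix.toEuclideanCLM (𝕜 := ℝ) C‖ * ‖e‖) :=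
          mul_le_mul_of_nonneg_left ((Matrix.toEuclideanCLM (𝕜 := ℝ) C).le_opNorm e)
            (norm_nonneg e)
      _ = ‖Matrix.toEuclideanCLM (𝕜 := ℝ) C‖ * ‖e‖ ^ 2 := by ring
      _ = ‖Matrix.toEuclideanCLM (𝕜 := ℝ) C‖ := by
          rw [hM.eigenvectorBasis.orthonormal.1 i, one_pow, mul_one]
  rcases le_or_gt 0 l with hl | hl
  · have h := eig_bound hA.posSemidef_sqrt hB.posSemidef_sqrt hl hv
    rw [hnorm, mul_one] at h
    have hAB : S * S - T * T = A - B := by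
      rw [hA.sqrt_mul_self, hB.sqrt_mul_self]
    rw [hAB] at h
    exact h.trans (habs (A - B))
  · have hv' : (T - S) *ᵥ ⇑e = (-l) • ⇑e := by
      have : T - S = -(S - T) := by abel
      rw [this, neg_mulVec, hv, neg_smul]
    have h := eig_bound hB.posSemidef_sqrt hA.posSemidef_sqrt (by linarith) hv'
    rw [hnorm, mul_one] at h
    rw [show (-l) ^ 2 = l ^ 2 from neg_pow_two l] at h
    have hBA : T * T - S * S = B - A := by
      rw [hA.sqrt_mul_self, hB.sqrt_mul_self]
    rw [hBA] at h
    have := h.trans (habs (B - A))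
    have hnn : ‖Matrix.toEuclideanCLM (𝕜 := ℝ) (B - A)‖
        = ‖Matrix.toEuclideanCLM (𝕜 := ℝ) (A - B)‖ := by
      rw [show B - A = -(A - B) from by abel, map_neg, norm_neg]
    linarith

lemma sqrt_diff_apply_le {d : ℕ} {A B : Matrix (Fin d) (Fin d) ℝ}
    (hA : A.PosSemidef) (hB : B.PosSemidef) (z : EuclideanSpace ℝ (Fin d)) :
    ‖Matrix.toEuclideanLin (hA.sqrt - hB.sqrt) z‖
      ≤ Real.sqrt ‖Matrix.toEuclideanCLM (𝕜 := ℝ) (A - B)‖ * ‖z‖ := by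
  set M := hA.sqrt - hB.sqrt with hMdef
  have hM : M.IsHermitian := (hA.posSemidef_sqrt.1).sub (hB.posSemidef_sqrt.1)
  set t : ℝ := ‖Matrix.toEuclideanCLM (𝕜 := ℝ) (A - B)‖ with ht
  have ht0 : 0 ≤ t := norm_nonneg _
  set Tc : EuclideanSpace ℝ (Fin d) →L[ℝ] EuclideanSpace ℝ (Fin d) :=
    Matrix.toEuclideanCLM (𝕜 := ℝ) M with hTc
  have hTlin : Matrix.toEuclideanLin M z = Tc z := rfl
  have hsa : _root_.IsSelfAdjoint Tc := by
    show star Tc = Tc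
    rw [hTc, ← map_star, Matrix.star_eq_conjTranspose, hM.eq]
  have hadj : ∀ x y : EuclideanSpace ℝ (Fin d), ⟪Tc x, y⟫ = ⟪x, Tc y⟫ := by
    intro x y
    nth_rewrite 1 [← ContinuousLinearMap.isSelfAdjoint_iff'.mp hsa]
    exact ContinuousLinearMap.adjoint_inner_left Tc y x
  set e := hM.eigenvectorBasis
  have hTe : ∀ i, Tc (e i) = hM.eigenvalues i • e i := by
    intro i
    have h := hM.mulVec_eigenvectorBasis i
    apply (WithLp.equiv 2 (Fin d → ℝ)).injective
    funext j
    have := congrFun h j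
    simpa [hTc, Matrix.ofLp_toEuclideanCLM] using this
  -- Parseval
  have hsum : ∀ w : EuclideanSpace ℝ (Fin d), ‖w‖ ^ 2 = ∑ i, ⟪e i, w⟫ ^ 2 := by
    intro w
    have h1 : ‖w‖ = ‖e.repr w‖ := (e.repr.norm_map w).symm
    rw [h1, EuclideanSpace.norm_eq]
    rw [Real.sq_sqrt (by positivity)]
    congr 1
    funext i
    rw [e.repr_apply_apply, Real.norm_eq_abs, sq_abs]
  have hcoef : ∀ i, ⟪e i, Tc z⟫ = hM.eigenvalues i * ⟪e i, z⟫ := by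
    intro i
    rw [← hadj, hTe i, inner_smul_left]
    simp
  have hsq : ‖Tc z‖ ^ 2 ≤ t * ‖z‖ ^ 2 := by
    rw [hsum (Tc z), hsum z, Finset.mul_sum]
    apply Finset.sum_le_sum
    intro i _
    rw [hcoef i, mul_pow]
    have h1 : hM.eigenvalues i ^ 2 ≤ t := eigenvalue_sq_le hA hB hM i
    have h2 : 0 ≤ ⟪e i, z⟫ ^ 2 := sq_nonneg _
    exact mul_le_mul_of_nonneg_right h1 h2
  rw [hTlin]
  have h3 : ‖Tc z‖ ≤ Real.sqrt (t * ‖z‖ ^ 2) := by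
    rw [← Real.sqrt_sq (norm_nonneg (Tc z))]
    exact Real.sqrt_le_sqrt hsq
  calc ‖Tc z‖ ≤ Real.sqrt (t * ‖z‖ ^ 2) := h3
    _ = Real.sqrt t * ‖z‖ := by
        rw [Real.sqrt_mul ht0, Real.sqrt_sq (norm_nonneg z)]

end Aux

lemma pow_le_factorial_mul_exp (m : ℕ) {x : ℝ} (hx : 0 ≤ x) :
    x ^ m ≤ m.factorial * Real.exp x := by
  have h := Real.sum_le_exp_of_nonneg hx (m+1)
  have h2 : x ^ m / m.factorial ≤ ∑ i ∈ Finset.range (m+1), x ^ i / i.factorial := by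
    exact Finset.single_le_sum (f := fun i => x ^ i / i.factorial) (fun i _ => by positivity) (Finset.self_mem_range_succ m)
  have hm : (0:ℝ) < m.factorial := by positivity
  rw [div_le_iff₀ hm] at h2
  calc x ^ m ≤ Real.exp x * m.factorial := h2.trans (by gcongr)
    _ = m.factorial * Real.exp x := by ring

lemma abs_rpow_le (p : ℝ) (hp : 0 ≤ p) (x : ℝ) :
    |x| ^ p ≤ 1 + x ^ (2 * ⌈p⌉₊) := by
  have hax : (0:ℝ) ≤ |x| := abs_nonneg x
  have heven : |x| ^ (2 * ⌈p⌉₊) = x ^ (2 * ⌈p⌉₊) := (even_two_mul _).pow_abs x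
  rcases le_or_gt (|x|) 1 with h | h
  · have : |x| ^ p ≤ 1 := Real.rpow_le_one hax h hp
    nlinarith [pow_nonneg hax (2 * ⌈p⌉₊), heven]
  · have h1 : |x| ^ p ≤ |x| ^ ((2 * ⌈p⌉₊ : ℕ) : ℝ) := by
      apply Real.rpow_le_rpow_of_exponent_le h.le
      have := Nat.le_ceil p
      push_cast
      linarith
    rw [Real.rpow_natCast, heven] at h1
    linarith

lemma pi_map_eval (d : ℕ) (ν : Measure ℝ) [IsProbabilityMeasure ν] (i : Fin d) :
    (Measure.pi fun _ : Fin d => ν).map (Function.eval i) = ν := by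
  ext s hs
  rw [Measure.map_apply (measurable_pi_apply i) hs]
  have hpre : Function.eval i ⁻¹' s
      = Set.pi Set.univ (Function.update (fun _ : Fin d => (Set.univ : Set ℝ)) i s) := by
    ext x
    simp only [Set.mem_preimage, Set.mem_pi, Set.mem_univ, true_implies,
      Function.update_apply, Function.eval]
    constructor
    · intro h j
      by_cases hj : j = i
      · subst hj; simp [h]
      · simp [hj]
    · intro h
      simpa using h i
  rw [hpre, Measure.pi_pi]
  rw [Fintype.prod_eq_single i (fun j hj => by simp [Function.update_apply, hj])]
  simp

lemma integrable_abs_rpow_gaussian {p : ℝ} (hp : 0 ≤ p) :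
    Integrable (fun x : ℝ => |x| ^ p) (gaussianReal 0 1) := by
  set m := ⌈p⌉₊ with hm
  rw [gaussianReal_of_var_ne_zero 0 one_ne_zero,
    integrable_withDensity_iff (measurable_gaussianPDF 0 1)
      (Filter.Eventually.of_forall fun x => ENNReal.ofReal_lt_top)]
  set C : ℝ := (√(2 * π))⁻¹ * (1 + 4 ^ m * m.factorial) with hC
  have hint : Integrable (fun x : ℝ => C * Real.exp (-(4:ℝ)⁻¹ * x ^ 2)) := by
    exact (integrable_exp_neg_mul_sq (by norm_num)).const_mul C
  apply hint.mono'
  · apply AEStronglyMeasurable.mul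
    · exact (measurable_abs.pow_const p).aestronglyMeasurable
    · exact (measurable_gaussianPDF 0 1).ennreal_toReal.aestronglyMeasurable
  · refine Filter.Eventually.of_forall fun x => ?_
    have hpdf : (gaussianPDF 0 1 x).toReal = (√(2 * π))⁻¹ * Real.exp (-x^2 / 2) := by
      rw [gaussianPDF, ENNReal.toReal_ofReal (gaussianPDFReal_nonneg 0 1 x), gaussianPDFReal]
      norm_num
    have h0 : (0:ℝ) ≤ |x| ^ p * (gaussianPDF 0 1 x).toReal :=
      mul_nonneg (Real.rpow_nonneg (abs_nonneg x) p) ENNReal.toReal_nonneg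
    rw [Real.norm_of_nonneg h0, hpdf]
    have h1 : |x| ^ p ≤ 1 + x ^ (2 * m) := abs_rpow_le p hp x
    have h2 : x ^ (2 * m) ≤ 4 ^ m * m.factorial * Real.exp (x ^ 2 / 4) := by
      have := pow_le_factorial_mul_exp m (x := x^2/4) (by positivity)
      calc x ^ (2*m) = (x^2)^m := by rw [pow_mul]
        _ = 4^m * (x^2/4)^m := by rw [div_pow]; field_simp
        _ ≤ 4^m * (m.factorial * Real.exp (x^2/4)) := by gcongr
        _ = 4 ^ m * m.factorial * Real.exp (x ^ 2 / 4) := by ring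
    have e1 : Real.exp (-x^2/2) ≤ Real.exp (-(4:ℝ)⁻¹ * x^2) :=
      Real.exp_le_exp.2 (by nlinarith [sq_nonneg x])
    have e2 : Real.exp (x^2/4) * Real.exp (-x^2/2) = Real.exp (-(4:ℝ)⁻¹ * x^2) := by
      rw [← Real.exp_add]; ring_nf
    have hpos : (0:ℝ) < Real.exp (-x^2/2) := Real.exp_pos _
    have hsq : (0:ℝ) ≤ (√(2 * π))⁻¹ := by positivity
    calc |x| ^ p * ((√(2 * π))⁻¹ * Real.exp (-x^2/2))
        ≤ (1 + x ^ (2*m)) * ((√(2 * π))⁻¹ * Real.exp (-x^2/2)) := by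
          apply mul_le_mul_of_nonneg_right h1 (by positivity)
      _ ≤ (1 + 4 ^ m * m.factorial * Real.exp (x ^ 2 / 4)) * ((√(2 * π))⁻¹ * Real.exp (-x^2/2)) := by
          apply mul_le_mul_of_nonneg_right (by linarith) (by positivity)
      _ = (√(2 * π))⁻¹ * (Real.exp (-x^2/2) + 4 ^ m * m.factorial * (Real.exp (x^2/4) * Real.exp (-x^2/2))) := by ring
      _ ≤ (√(2 * π))⁻¹ * (Real.exp (-(4:ℝ)⁻¹*x^2) + 4 ^ m * m.factorial * Real.exp (-(4:ℝ)⁻¹*x^2)) := by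
          rw [e2]; apply mul_le_mul_of_nonneg_left _ hsq
          have : (0:ℝ) ≤ 4 ^ m * m.factorial := by positivity
          linarith
      _ = C * Real.exp (-(4:ℝ)⁻¹ * x ^ 2) := by rw [hC]; ring

lemma memLp_id_gaussian {p : ℝ} (hp : 1 ≤ p) :
    MemLp (id : ℝ → ℝ) (ENNReal.ofReal p) (gaussianReal 0 1) := by
  have hp0 : (0:ℝ) < p := lt_of_lt_of_le one_pos hp
  have hq0 : ENNReal.ofReal p ≠ 0 := by simp [ENNReal.ofReal_eq_zero, not_le, hp0]
  have hqt : ENNReal.ofReal p ≠ ∞ := ENNReal.ofReal_ne_top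
  refine (memLp_norm_rpow_iff (q := ENNReal.ofReal p) (p := ENNReal.ofReal p)
    (aestronglyMeasurable_id (μ := gaussianReal 0 1)) hq0 hqt).mp ?_
  rw [ENNReal.div_self hq0 hqt, memLp_one_iff_integrable]
  have := integrable_abs_rpow_gaussian hp0.le
  simpa [ENNReal.toReal_ofReal hp0.le, Real.norm_eq_abs] using this

lemma memLp_coord (d : ℕ) (i : Fin d) {p : ℝ} (hp : 1 ≤ p) :
    MemLp (fun x : Fin d → ℝ => x i) (ENNReal.ofReal p)
      (Measure.pi fun _ : Fin d => gaussianReal 0 1) := by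
  have h := memLp_id_gaussian hp
  rw [← pi_map_eval d (gaussianReal 0 1) i] at h
  exact (memLp_map_measure_iff aestronglyMeasurable_id
    (measurable_pi_apply i).aemeasurable).mp h

lemma memLp_id_stdGaussian (d : ℕ) {p : ℝ} (hp : 1 ≤ p) :
    MemLp (id : EuclideanSpace ℝ (Fin d) → EuclideanSpace ℝ (Fin d)) (ENNReal.ofReal p)
      (stdGaussian d) := by
  rw [_root_.stdGaussian, memLp_map_measure_iff aestronglyMeasurable_id
    ((EuclideanSpace.equiv (Fin d) ℝ).symm.continuous.measurable).aemeasurable]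
  have : (id ∘ ⇑(EuclideanSpace.equiv (Fin d) ℝ).symm) =
      fun x : Fin d → ℝ => ∑ i : Fin d, x i • ((EuclideanSpace.equiv (Fin d) ℝ).symm (Pi.single i 1)) := by
    funext x
    apply (EuclideanSpace.equiv (Fin d) ℝ).injective
    funext j
    simp [EuclideanSpace.equiv, Finset.sum_apply, Pi.single_apply]
  rw [this]
  apply memLp_finset_sum
  intro i _
  set c : EuclideanSpace ℝ (Fin d) := (EuclideanSpace.equiv (Fin d) ℝ).symm (Pi.single i 1)
  refine MemLp.of_le_mul (c := ‖c‖) (memLp_coord d i hp) ?_ ?_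
  · exact ((measurable_pi_apply i).aestronglyMeasurable).smul aestronglyMeasurable_const
  · refine Filter.Eventually.of_forall fun x => ?_
    rw [norm_smul]
    exact le_of_eq (mul_comm _ _)

/-- For symmetric positive semidefinite `d×d` matrices `A, B` and `p ≥ 1`, the
Wasserstein-`p` distance between `N(0,A)` and `N(0,B)` is bounded by
`C_{p,d} ‖A - B‖_op^{1/2}`, with a constant depending only on `p` and `d`.
Here `‖·‖_op` is the operator norm, expressed via `Matrix.toEuclideanCLM`. -/
theorem wasserstein_gaussian_le (p : ℝ) (hp : 1 ≤ p) (d : ℕ) :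
    ∃ C : ℝ, ∀ (A B : Matrix (Fin d) (Fin d) ℝ) (hA : A.PosSemidef) (hB : B.PosSemidef),
      wassersteinDist p (gaussianOf hA) (gaussianOf hB)
        ≤ C * Real.sqrt ‖Matrix.toEuclideanCLM (𝕜 := ℝ) (A - B)‖ := by
  classical
  have hp0 : (0:ℝ) < p := lt_of_lt_of_le one_pos hp
  have hq0 : ENNReal.ofReal p ≠ 0 := by simp [ENNReal.ofReal_eq_zero, not_le, hp0]
  have hqt : ENNReal.ofReal p ≠ ∞ := ENNReal.ofReal_ne_top
  have hprob : IsProbabilityMeasure (stdGaussian d) := by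
    unfold _root_.stdGaussian
    exact Measure.isProbabilityMeasure_map
      ((EuclideanSpace.equiv (Fin d) ℝ).symm.continuous.measurable).aemeasurable
  have hid : MemLp (id : EuclideanSpace ℝ (Fin d) → EuclideanSpace ℝ (Fin d))
      (ENNReal.ofReal p) (stdGaussian d) := memLp_id_stdGaussian d hp
  have hKint : Integrable (fun z : EuclideanSpace ℝ (Fin d) => ‖z‖ ^ p) (stdGaussian d) := by
    have := hid.integrable_norm_rpow hq0 hqt
    simpa [ENNReal.toReal_ofReal hp0.le] using this
  set K : ℝ := ∫ z, ‖z‖ ^ p ∂(stdGaussian d) with hK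
  have hK0 : 0 ≤ K := integral_nonneg fun z => Real.rpow_nonneg (norm_nonneg _) p
  refine ⟨K ^ (1/p), fun A B hA hB => ?_⟩
  set t : ℝ := Real.sqrt ‖Matrix.toEuclideanCLM (𝕜 := ℝ) (A - B)‖ with htdef
  have ht0 : 0 ≤ t := Real.sqrt_nonneg _
  set f : EuclideanSpace ℝ (Fin d) → EuclideanSpace ℝ (Fin d) :=
    ⇑(Matrix.toEuclideanLin hA.sqrt) with hfdef
  set g : EuclideanSpace ℝ (Fin d) → EuclideanSpace ℝ (Fin d) :=
    ⇑(Matrix.toEuclideanLin hB.sqrt) with hgdef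
  have hf : Measurable f := (Matrix.toEuclideanLin hA.sqrt).continuous_of_finiteDimensional.measurable
  have hg : Measurable g := (Matrix.toEuclideanLin hB.sqrt).continuous_of_finiteDimensional.measurable
  set γ : Measure (EuclideanSpace ℝ (Fin d) × EuclideanSpace ℝ (Fin d)) :=
    (stdGaussian d).map (fun z => (f z, g z)) with hγ
  have hγprob : IsProbabilityMeasure γ :=
    Measure.isProbabilityMeasure_map ((hf.prodMk hg)).aemeasurable
  have hfst : γ.map Prod.fst = gaussianOf hA := by
    rw [hγ, Measure.map_map measurable_fst (hf.prodMk hg)]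
    rfl
  have hsnd : γ.map Prod.snd = gaussianOf hB := by
    rw [hγ, Measure.map_map measurable_snd (hf.prodMk hg)]
    rfl
  have hmeas : AEStronglyMeasurable
      (fun z : EuclideanSpace ℝ (Fin d) × EuclideanSpace ℝ (Fin d) => ‖z.1 - z.2‖ ^ p) γ :=
    ((measurable_fst.sub measurable_snd).norm.pow_const p).aestronglyMeasurable
  have hchange : (∫ z, ‖z.1 - z.2‖ ^ p ∂γ)
      = ∫ z, ‖f z - g z‖ ^ p ∂(stdGaussian d) := by
    rw [hγ, integral_map (hf.prodMk hg).aemeasurable hmeas]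
  have hdiffeq : (fun z : EuclideanSpace ℝ (Fin d) => f z - g z)
      = ⇑(Matrix.toEuclideanCLM (𝕜 := ℝ) (hA.sqrt - hB.sqrt)) := by
    funext z
    show Matrix.toEuclideanLin hA.sqrt z - Matrix.toEuclideanLin hB.sqrt z = _
    rw [← LinearMap.sub_apply, ← map_sub]
    rfl
  have hmem : MemLp (fun z : EuclideanSpace ℝ (Fin d) => f z - g z)
      (ENNReal.ofReal p) (stdGaussian d) := by
    rw [hdiffeq]
    exact (Matrix.toEuclideanCLM (𝕜 := ℝ) (hA.sqrt - hB.sqrt)).comp_memLp' hid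
  have hint1 : Integrable (fun z : EuclideanSpace ℝ (Fin d) => ‖f z - g z‖ ^ p)
      (stdGaussian d) := by
    have := hmem.integrable_norm_rpow hq0 hqt
    simpa [ENNReal.toReal_ofReal hp0.le] using this
  have hint2 : Integrable (fun z : EuclideanSpace ℝ (Fin d) => t ^ p * ‖z‖ ^ p)
      (stdGaussian d) := hKint.const_mul _
  have hptw : ∀ z : EuclideanSpace ℝ (Fin d), ‖f z - g z‖ ^ p ≤ t ^ p * ‖z‖ ^ p := by
    intro z
    have h1 : ‖f z - g z‖ ≤ t * ‖z‖ := by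
      have h2 := sqrt_diff_apply_le hA hB z
      have h3 : f z - g z = Matrix.toEuclideanLin (hA.sqrt - hB.sqrt) z := by
        show Matrix.toEuclideanLin hA.sqrt z - Matrix.toEuclideanLin hB.sqrt z = _
        rw [← LinearMap.sub_apply, ← map_sub]
      rw [h3]
      exact h2
    calc ‖f z - g z‖ ^ p ≤ (t * ‖z‖) ^ p :=
          Real.rpow_le_rpow (norm_nonneg _) h1 hp0.le
      _ = t ^ p * ‖z‖ ^ p := Real.mul_rpow ht0 (norm_nonneg _)
  have hintle : (∫ z, ‖f z - g z‖ ^ p ∂(stdGaussian d)) ≤ t ^ p * K := by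
    rw [hK, ← integral_const_mul]
    exact integral_mono hint1 hint2 hptw
  have hmemset : (∫ z, ‖z.1 - z.2‖ ^ p ∂γ) ^ (1/p) ∈
      {r : ℝ | ∃ γ' : Measure (EuclideanSpace ℝ (Fin d) × EuclideanSpace ℝ (Fin d)),
        IsProbabilityMeasure γ' ∧ γ'.map Prod.fst = gaussianOf hA ∧
        γ'.map Prod.snd = gaussianOf hB ∧
        r = (∫ z, ‖z.1 - z.2‖ ^ p ∂γ') ^ (1 / p)} := ⟨γ, hγprob, hfst, hsnd, rfl⟩
  have hbdd : BddBelow {r : ℝ | ∃ γ' : Measure (EuclideanSpace ℝ (Fin d) × EuclideanSpace ℝ (Fin d)),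
      IsProbabilityMeasure γ' ∧ γ'.map Prod.fst = gaussianOf hA ∧
      γ'.map Prod.snd = gaussianOf hB ∧
      r = (∫ z, ‖z.1 - z.2‖ ^ p ∂γ') ^ (1 / p)} := by
    refine ⟨0, ?_⟩
    rintro r ⟨γ', _, _, _, rfl⟩
    exact Real.rpow_nonneg
      (integral_nonneg fun z => Real.rpow_nonneg (norm_nonneg _) p) _
  have hle1 : wassersteinDist p (gaussianOf hA) (gaussianOf hB)
      ≤ (∫ z, ‖z.1 - z.2‖ ^ p ∂γ) ^ (1/p) := csInf_le hbdd hmemset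
  have hle2 : (∫ z, ‖z.1 - z.2‖ ^ p ∂γ) ^ (1/p) ≤ (t ^ p * K) ^ (1/p) := by
    apply Real.rpow_le_rpow
      (integral_nonneg fun z => Real.rpow_nonneg (norm_nonneg _) p)
      (by rw [hchange]; exact hintle) (by positivity)
  have hle3 : (t ^ p * K) ^ (1/p) = K ^ (1/p) * t := by
    rw [Real.mul_rpow (Real.rpow_nonneg ht0 p) hK0, ← Real.rpow_mul ht0,
      mul_one_div_cancel hp0.ne', Real.rpow_one, mul_comm]
  calc wassersteinDist p (gaussianOf hA) (gaussianOf hB)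
      ≤ (∫ z, ‖z.1 - z.2‖ ^ p ∂γ) ^ (1/p) := hle1
    _ ≤ (t ^ p * K) ^ (1/p) := hle2
    _ = K ^ (1/p) * t := hle3
end

section
/- Let {X_i}_{i=0}^{n-1} be an M-dependent sequence of centered R^d-valued random vectors (blocks of indices at distance more than M are independent) with sup_i E‖X_i‖^2 ≤ σ^2 < ∞. Partition {0,...,n-1} into big blocks of length ℓ ≥ M and small blocks of length M as in the big–small block decomposition, let A be the sum over big blocks and Σ_n = (1/n)Var(Σ_i X_i). Then ‖(1/n)Var(A) − Σ_n‖ ≤ C σ^2 ( (2M+1)^2/ℓ + ℓ(2M+1)/n ) for an absolute constant C. -/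
open MeasureTheory ProbabilityTheory
open scoped ENNReal

/-- The covariance matrix of an `R^d`-valued random vector `S`. -/
noncomputable def covMatrix {Ω : Type*} [MeasurableSpace Ω] {d : ℕ} (Pr : Measure Ω)
    (S : Ω → EuclideanSpace ℝ (Fin d)) : Matrix (Fin d) (Fin d) ℝ :=
  Matrix.of fun a b =>
    ∫ ω, (S ω a - ∫ ω', S ω' a ∂Pr) * (S ω b - ∫ ω', S ω' b ∂Pr) ∂Pr

/-- `M`-dependence: subfamilies of `{X_i}` indexed by sets at distance more than `M`
are independent. -/
def MDependent {Ω : Type*} [MeasurableSpace Ω] {d : ℕ} (Pr : Measure Ω)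
    (X : ℕ → Ω → EuclideanSpace ℝ (Fin d)) (M : ℕ) : Prop :=
  ∀ K L : Set ℕ, (∀ i ∈ K, ∀ j ∈ L, (M : ℤ) < |(i : ℤ) - (j : ℤ)|) →
    IndepFun (fun ω => fun i : K => X i ω) (fun ω => fun j : L => X j ω) Pr

open scoped RealInnerProductSpace

noncomputable def cmat {Ω : Type*} [MeasurableSpace Ω] {d : ℕ} (Pr : Measure Ω)
    (f g : Ω → EuclideanSpace ℝ (Fin d)) : Matrix (Fin d) (Fin d) ℝ :=
  Matrix.of fun a b => ∫ ω, f ω a * g ω b ∂Pr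

section Aux
set_option linter.unusedSectionVars false
variable {Ω : Type*} [MeasurableSpace Ω] {d : ℕ} {Pr : Measure Ω} [IsProbabilityMeasure Pr]

lemma comp_memℒp2 {f : Ω → EuclideanSpace ℝ (Fin d)} (hf : MemLp f 2 Pr) (a : Fin d) :
    MemLp (fun ω => f ω a) 2 Pr :=
  (EuclideanSpace.proj a : EuclideanSpace ℝ (Fin d) →L[ℝ] ℝ).comp_memLp' hf

lemma comp_int0 {f : Ω → EuclideanSpace ℝ (Fin d)} (hf : MemLp f 2 Pr)
    (h0 : ∫ ω, f ω ∂Pr = 0) (a : Fin d) : ∫ ω, f ω a ∂Pr = 0 := by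
  have hi : Integrable f Pr := hf.integrable (by norm_num)
  have := (EuclideanSpace.proj (𝕜 := ℝ) a).integral_comp_comm hi
  simpa [h0] using this

lemma memℒp2_mul_integrable {f g : Ω → ℝ} (hf : MemLp f 2 Pr) (hg : MemLp g 2 Pr) :
    Integrable (fun ω => f ω * g ω) Pr := by
  have h := L2.integrable_inner (𝕜 := ℝ) (hf.toLp f) (hg.toLp g)
  refine h.congr ?_
  filter_upwards [hf.coeFn_toLp, hg.coeFn_toLp] with ω h1 h2
  simp [h1, h2, mul_comm]

lemma int_CS (f g : Ω → ℝ) (hf : MemLp f 2 Pr) (hg : MemLp g 2 Pr) :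
    (∫ ω, f ω * g ω ∂Pr) ^ 2 ≤ (∫ ω, f ω ^ 2 ∂Pr) * (∫ ω, g ω ^ 2 ∂Pr) := by
  set F := hf.toLp f with hF
  set G := hg.toLp g with hG
  have h1 : ⟪F, G⟫ = ∫ ω, f ω * g ω ∂Pr := by
    rw [L2.inner_def]
    refine integral_congr_ae ?_
    filter_upwards [hf.coeFn_toLp, hg.coeFn_toLp] with ω h1 h2
    simp [hF, hG, h1, h2, mul_comm]
  have h2 : ⟪F, F⟫ = ∫ ω, f ω ^ 2 ∂Pr := by
    rw [L2.inner_def]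
    refine integral_congr_ae ?_
    filter_upwards [hf.coeFn_toLp] with ω h1
    simp [hF, h1, sq]
  have h3 : ⟪G, G⟫ = ∫ ω, g ω ^ 2 ∂Pr := by
    rw [L2.inner_def]
    refine integral_congr_ae ?_
    filter_upwards [hg.coeFn_toLp] with ω h1
    simp [hG, h1, sq]
  calc (∫ ω, f ω * g ω ∂Pr) ^ 2 = ⟪F, G⟫ ^ 2 := by rw [h1]
    _ ≤ ‖F‖ ^ 2 * ‖G‖ ^ 2 := by
        have := abs_real_inner_le_norm F G
        nlinarith [abs_nonneg (⟪F, G⟫), sq_abs (⟪F, G⟫), norm_nonneg F, norm_nonneg G]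
    _ = ⟪F, F⟫ * ⟪G, G⟫ := by rw [real_inner_self_eq_norm_sq, real_inner_self_eq_norm_sq]
    _ = _ := by rw [h2, h3]

lemma covMatrix_sum {ι : Type*} (s : Finset ι) (Y : ι → Ω → EuclideanSpace ℝ (Fin d))
    (h2 : ∀ i, MemLp (Y i) 2 Pr) (h0 : ∀ i, ∫ ω, Y i ω ∂Pr = 0) :
    covMatrix Pr (fun ω => ∑ i ∈ s, Y i ω) = ∑ i ∈ s, ∑ j ∈ s, cmat Pr (Y i) (Y j) := by
  ext a b
  have happ : ∀ (ω : Ω) (c : Fin d), (∑ i ∈ s, Y i ω) c = ∑ i ∈ s, Y i ω c := by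
    intro ω c
    have := map_sum (EuclideanSpace.proj (𝕜 := ℝ) c) (fun i => Y i ω) s
    simpa only [PiLp.proj_apply] using this
  have hmean : ∀ c : Fin d, ∫ ω, (∑ i ∈ s, Y i ω) c ∂Pr = 0 := by
    intro c
    rw [integral_congr_ae (Filter.Eventually.of_forall fun ω => happ ω c),
      integral_finset_sum _ fun i _ =>
        ((comp_memℒp2 (h2 i) c).integrable (by norm_num))]
    exact Finset.sum_eq_zero fun i _ => comp_int0 (h2 i) (h0 i) c
  show (∫ ω, ((∑ i ∈ s, Y i ω) a - _) * ((∑ i ∈ s, Y i ω) b - _) ∂Pr) = _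
  rw [hmean a, hmean b]
  simp only [sub_zero]
  have : ∀ ω, ((∑ i ∈ s, Y i ω) a) * ((∑ i ∈ s, Y i ω) b)
      = ∑ i ∈ s, ∑ j ∈ s, Y i ω a * Y j ω b := by
    intro ω
    rw [happ ω a, happ ω b, Finset.sum_mul_sum]
  rw [integral_congr_ae (Filter.Eventually.of_forall this)]
  rw [integral_finset_sum _ fun i _ => integrable_finset_sum _ fun j _ =>
    memℒp2_mul_integrable (comp_memℒp2 (h2 i) a) (comp_memℒp2 (h2 j) b)]
  simp only [Matrix.sum_apply, cmat, Matrix.of_apply]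
  refine Finset.sum_congr rfl fun i _ => ?_
  rw [integral_finset_sum _ fun j _ =>
    memℒp2_mul_integrable (comp_memℒp2 (h2 i) a) (comp_memℒp2 (h2 j) b)]

lemma norm_sq_int {f : Ω → EuclideanSpace ℝ (Fin d)} (hf : MemLp f 2 Pr) :
    ∫ ω, ‖f ω‖ ^ 2 ∂Pr = ∑ a, ∫ ω, f ω a ^ 2 ∂Pr := by
  rw [← integral_finset_sum _ fun a _ => (comp_memℒp2 hf a).integrable_sq]
  refine integral_congr_ae (Filter.Eventually.of_forall fun ω => ?_)
  show ‖f ω‖ ^ 2 = ∑ a, f ω a ^ 2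
  rw [EuclideanSpace.norm_eq, Real.sq_sqrt (Finset.sum_nonneg fun a _ => sq_nonneg _)]
  simp [sq_abs]

lemma cmat_norm_le {f g : Ω → EuclideanSpace ℝ (Fin d)} (hf : MemLp f 2 Pr)
    (hg : MemLp g 2 Pr) (σ2 : ℝ)
    (hfb : ∫ ω, ‖f ω‖ ^ 2 ∂Pr ≤ σ2) (hgb : ∫ ω, ‖g ω‖ ^ 2 ∂Pr ≤ σ2) :
    ‖Matrix.toEuclideanCLM (𝕜 := ℝ) (cmat Pr f g)‖ ≤ σ2 := by
  have hσ : 0 ≤ σ2 :=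
    le_trans (integral_nonneg fun ω => sq_nonneg _) hfb
  refine ContinuousLinearMap.opNorm_le_bound _ hσ fun v => ?_
  set u := Matrix.toEuclideanCLM (𝕜 := ℝ) (cmat Pr f g) v with hu
  have hcomp : ∀ a, u a = ∫ ω, f ω a * ⟪g ω, v⟫ ∂Pr := by
    intro a
    have h1 : u a = ∑ b, (cmat Pr f g) a b * v b := by
      have := Matrix.ofLp_toEuclideanCLM (n := Fin d) (𝕜 := ℝ) (cmat Pr f g) v
      have h2 : (WithLp.ofLp u) a = Matrix.mulVec (cmat Pr f g) (WithLp.ofLp v) a := by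
        rw [hu, this]
      simpa [Matrix.mulVec, dotProduct] using h2
    rw [h1]
    have h3 : ∀ b : Fin d, (cmat Pr f g) a b * v b = ∫ ω, f ω a * g ω b * v b ∂Pr := by
      intro b
      rw [integral_mul_const]
      rfl
    rw [Finset.sum_congr rfl fun b _ => h3 b,
      ← integral_finset_sum _ fun b _ =>
        (memℒp2_mul_integrable (comp_memℒp2 hf a) (comp_memℒp2 hg b)).mul_const _]
    refine integral_congr_ae (Filter.Eventually.of_forall fun ω => ?_)
    show (∑ b, f ω a * g ω b * v b) = f ω a * ⟪g ω, v⟫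
    simp only [PiLp.inner_apply, RCLike.inner_apply, conj_trivial, Finset.mul_sum]
    exact Finset.sum_congr rfl fun b _ => by ring
  have hh : MemLp (fun ω => ⟪g ω, v⟫) 2 Pr := hg.inner_const v
  have hint_h2 : ∫ ω, ⟪g ω, v⟫ ^ 2 ∂Pr ≤ σ2 * ‖v‖ ^ 2 := by
    have hpt : ∀ ω, ⟪g ω, v⟫ ^ 2 ≤ ‖g ω‖ ^ 2 * ‖v‖ ^ 2 := by
      intro ω
      have := abs_real_inner_le_norm (g ω) v
      nlinarith [abs_nonneg (⟪g ω, v⟫), sq_abs (⟪g ω, v⟫), norm_nonneg (g ω), norm_nonneg v]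
    calc ∫ ω, ⟪g ω, v⟫ ^ 2 ∂Pr ≤ ∫ ω, ‖g ω‖ ^ 2 * ‖v‖ ^ 2 ∂Pr :=
          integral_mono hh.integrable_sq (hg.norm.integrable_sq.mul_const _) hpt
      _ = (∫ ω, ‖g ω‖ ^ 2 ∂Pr) * ‖v‖ ^ 2 := integral_mul_const _ _
      _ ≤ σ2 * ‖v‖ ^ 2 := mul_le_mul_of_nonneg_right hgb (sq_nonneg _)
  have husq : ‖u‖ ^ 2 ≤ (σ2 * ‖v‖) ^ 2 := by
    have hnu : ‖u‖ ^ 2 = ∑ a, u a ^ 2 := by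
      rw [EuclideanSpace.norm_eq, Real.sq_sqrt (Finset.sum_nonneg fun a _ => sq_nonneg _)]
      simp [sq_abs]
    rw [hnu]
    have hstep : ∀ a, u a ^ 2 ≤ (∫ ω, f ω a ^ 2 ∂Pr) * (σ2 * ‖v‖ ^ 2) := by
      intro a
      rw [hcomp a]
      calc (∫ ω, f ω a * ⟪g ω, v⟫ ∂Pr) ^ 2
          ≤ (∫ ω, f ω a ^ 2 ∂Pr) * (∫ ω, ⟪g ω, v⟫ ^ 2 ∂Pr) :=
            int_CS _ _ (comp_memℒp2 hf a) hh
        _ ≤ (∫ ω, f ω a ^ 2 ∂Pr) * (σ2 * ‖v‖ ^ 2) :=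
            mul_le_mul_of_nonneg_left hint_h2 (integral_nonneg fun ω => sq_nonneg _)
    calc ∑ a, u a ^ 2 ≤ ∑ a, (∫ ω, f ω a ^ 2 ∂Pr) * (σ2 * ‖v‖ ^ 2) :=
          Finset.sum_le_sum fun a _ => hstep a
      _ = (∑ a, ∫ ω, f ω a ^ 2 ∂Pr) * (σ2 * ‖v‖ ^ 2) := by rw [← Finset.sum_mul]
      _ = (∫ ω, ‖f ω‖ ^ 2 ∂Pr) * (σ2 * ‖v‖ ^ 2) := by rw [norm_sq_int hf]
      _ ≤ σ2 * (σ2 * ‖v‖ ^ 2) := by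
          refine mul_le_mul_of_nonneg_right hfb ?_
          positivity
      _ = (σ2 * ‖v‖) ^ 2 := by ring
  have h2 := Real.sqrt_le_sqrt husq
  rwa [Real.sqrt_sq (norm_nonneg u), Real.sqrt_sq (by positivity)] at h2

lemma cmat_eq_zero {X : ℕ → Ω → EuclideanSpace ℝ (Fin d)} {M : ℕ}
    (hdep : MDependent Pr X M)
    (hmeas : ∀ i, Measurable (X i)) (h2 : ∀ i, MemLp (X i) 2 Pr)
    (h0 : ∀ i, ∫ ω, X i ω ∂Pr = 0) {i j : ℕ}
    (hij : (M : ℤ) < |(i : ℤ) - (j : ℤ)|) :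
    cmat Pr (X i) (X j) = 0 := by
  have hbase := hdep {i} {j} (by
    intro a ha b hb
    simp only [Set.mem_singleton_iff] at ha hb
    subst ha; subst hb; exact hij)
  ext a b
  have hind : IndepFun (fun ω => X i ω a) (fun ω => X j ω b) Pr := by
    have hφ : Measurable fun F : (({i} : Set ℕ) → EuclideanSpace ℝ (Fin d)) =>
        F ⟨i, rfl⟩ a :=
      ((EuclideanSpace.proj (𝕜 := ℝ) a).continuous.measurable).comp
        (measurable_pi_apply _)
    have hψ : Measurable fun F : (({j} : Set ℕ) → EuclideanSpace ℝ (Fin d)) =>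
        F ⟨j, rfl⟩ b :=
      ((EuclideanSpace.proj (𝕜 := ℝ) b).continuous.measurable).comp
        (measurable_pi_apply _)
    exact hbase.comp hφ hψ
  have hXa : AEStronglyMeasurable (fun ω => X i ω a) Pr :=
    (((EuclideanSpace.proj (𝕜 := ℝ) a).continuous.measurable).comp (hmeas i)).aestronglyMeasurable
  have hXb : AEStronglyMeasurable (fun ω => X j ω b) Pr :=
    (((EuclideanSpace.proj (𝕜 := ℝ) b).continuous.measurable).comp (hmeas j)).aestronglyMeasurable
  have hmul := hind.integral_mul_eq_mul_integral hXa hXb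
  have hia : ∫ ω, X i ω a ∂Pr = 0 := comp_int0 (h2 i) (h0 i) a
  show (∫ ω, X i ω a * X j ω b ∂Pr) = 0
  simp only [Pi.mul_apply] at hmul
  rw [hmul, hia, zero_mul]

lemma row_bound (n M i : ℕ) (σ2 : ℝ) (hσ2 : 0 ≤ σ2) :
    ∑ j ∈ Finset.range n, (if |(i : ℤ) - (j : ℤ)| ≤ (M : ℤ) then σ2 else 0)
      ≤ (2 * M + 1 : ℝ) * σ2 := by
  rw [← Finset.sum_filter]
  rw [Finset.sum_const, nsmul_eq_mul]
  have hsub : (Finset.range n).filter (fun j : ℕ => |(i : ℤ) - (j : ℤ)| ≤ (M : ℤ))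
      ⊆ Finset.Icc (i - M) (i + M) := by
    intro j hj
    simp only [Finset.mem_filter, Finset.mem_range] at hj
    have := abs_le.mp hj.2
    simp only [Finset.mem_Icc]
    omega
  have hcard : ((Finset.range n).filter
      (fun j : ℕ => |(i : ℤ) - (j : ℤ)| ≤ (M : ℤ))).card ≤ 2 * M + 1 := by
    refine le_trans (Finset.card_le_card hsub) ?_
    rw [Nat.card_Icc]
    omega
  calc (((Finset.range n).filter (fun j : ℕ => |(i : ℤ) - (j : ℤ)| ≤ (M : ℤ))).card : ℝ) * σ2
      ≤ (2 * M + 1 : ℝ) * σ2 := by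
        refine mul_le_mul_of_nonneg_right ?_ hσ2
        exact_mod_cast hcard

end Aux


set_option maxHeartbeats 1000000 in
set_option synthInstance.maxHeartbeats 200000 in
/-- Big–small block decomposition for `M`-dependent centered sequences: with big blocks
of length `ℓ ≥ M`, small blocks of length `M`, `k = ⌊n/(ℓ+M)⌋` blocks, `A` the sum over
big blocks and `Σ_n = (1/n)Var(Σ_i X_i)`, one has
`‖(1/n)Var(A) − Σ_n‖ ≤ C σ² ((2M+1)²/ℓ + ℓ(2M+1)/n)` for an absolute constant `C`
(`‖·‖` is the operator norm). -/
theorem big_small_block_covariance :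
    ∃ C : ℝ, ∀ (d : ℕ) (Ω : Type) [MeasurableSpace Ω]
      (Pr : Measure Ω) [IsProbabilityMeasure Pr]
      (n M ℓ : ℕ) (X : ℕ → Ω → EuclideanSpace ℝ (Fin d)) (σ : ℝ),
      1 ≤ n → 1 ≤ ℓ → M ≤ ℓ →
      (∀ i, Measurable (X i)) →
      (∀ i, MemLp (X i) 2 Pr) →
      (∀ i, ∫ ω, X i ω ∂Pr = 0) →
      (∀ i, ∫ ω, ‖X i ω‖ ^ 2 ∂Pr ≤ σ ^ 2) →
      MDependent Pr X M →
      ‖Matrix.toEuclideanCLM (𝕜 := ℝ)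
          (((n : ℝ))⁻¹ • covMatrix Pr (fun ω =>
              ∑ j ∈ Finset.range (n / (ℓ + M)), ∑ i ∈ Finset.range ℓ,
                X (j * (ℓ + M) + i) ω)
            - ((n : ℝ))⁻¹ • covMatrix Pr (fun ω => ∑ i ∈ Finset.range n, X i ω))‖
        ≤ C * σ ^ 2 * (((2 * M + 1 : ℝ)) ^ 2 / ℓ + (ℓ : ℝ) * (2 * M + 1) / n) := by
  refine ⟨8, ?_⟩
  intro d Ω _ Pr _ n M ℓ X σ hn hℓ hMℓ hmeas h2 h0 hσ hdep
  have hσ2 : (0 : ℝ) ≤ σ ^ 2 :=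
    le_trans (integral_nonneg fun ω => sq_nonneg _) (hσ 0)
  set k := n / (ℓ + M) with hk
  set T := (Finset.range k ×ˢ Finset.range ℓ).image (fun p => p.1 * (ℓ + M) + p.2) with hT
  set R := Finset.range n with hR
  -- injectivity of the block indexing
  have hdm : ∀ x y : ℕ, y < ℓ →
      (x * (ℓ + M) + y) % (ℓ + M) = y ∧ (x * (ℓ + M) + y) / (ℓ + M) = x := by
    intro x y hy
    constructor
    · rw [mul_comm, Nat.mul_add_mod]
      exact Nat.mod_eq_of_lt (by omega)
    · rw [mul_comm, Nat.mul_add_div (by omega), Nat.div_eq_of_lt (by omega)]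
      omega
  have hinj : ∀ p ∈ Finset.range k ×ˢ Finset.range ℓ,
      ∀ q ∈ Finset.range k ×ˢ Finset.range ℓ,
      p.1 * (ℓ + M) + p.2 = q.1 * (ℓ + M) + q.2 → p = q := by
    intro p hp q hq heq
    simp only [Finset.mem_product, Finset.mem_range] at hp hq
    have e1 := hdm p.1 p.2 hp.2
    have e2 := hdm q.1 q.2 hq.2
    have hb : p.2 = q.2 := by rw [← e1.1, ← e2.1, heq]
    have ha : p.1 = q.1 := by rw [← e1.2, ← e2.2, heq]
    exact Prod.ext ha hb
  have hkn : k * (ℓ + M) ≤ n := Nat.div_mul_le_self n (ℓ + M)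
  have hTsub : T ⊆ R := by
    intro t ht
    simp only [hT, Finset.mem_image, Finset.mem_product, Finset.mem_range] at ht
    obtain ⟨p, ⟨hp1, hp2⟩, rfl⟩ := ht
    have hstep : (p.1 + 1) * (ℓ + M) ≤ k * (ℓ + M) :=
      Nat.mul_le_mul_right _ (by omega)
    rw [hR, Finset.mem_range]
    calc p.1 * (ℓ + M) + p.2 < p.1 * (ℓ + M) + (ℓ + M) := by omega
      _ = (p.1 + 1) * (ℓ + M) := by ring
      _ ≤ k * (ℓ + M) := hstep
      _ ≤ n := hkn
  have hcardT : T.card = k * ℓ := by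
    rw [hT, Finset.card_image_of_injOn (fun x hx y hy h => hinj x hx y hy h),
      Finset.card_product, Finset.card_range, Finset.card_range]
  have hcardRT : (R \ T).card = n - k * ℓ := by
    rw [Finset.card_sdiff_of_subset hTsub, hR, Finset.card_range, hcardT]
  -- rewrite the big-block sum as a sum over T
  have hre : (fun ω => ∑ j ∈ Finset.range k, ∑ i ∈ Finset.range ℓ,
      X (j * (ℓ + M) + i) ω) = (fun ω => ∑ t ∈ T, X t ω) := by
    funext ω
    rw [hT, Finset.sum_image hinj, Finset.sum_product]
  -- covariance expansions
  have hTT : (∑ p ∈ T ×ˢ T, cmat Pr (X p.1) (X p.2))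
      = ∑ i ∈ T, ∑ j ∈ T, cmat Pr (X i) (X j) :=
    Finset.sum_product' T T fun i j => cmat Pr (X i) (X j)
  have hRR : (∑ p ∈ R ×ˢ R, cmat Pr (X p.1) (X p.2))
      = ∑ i ∈ R, ∑ j ∈ R, cmat Pr (X i) (X j) :=
    Finset.sum_product' R R fun i j => cmat Pr (X i) (X j)
  have hsubTT : T ×ˢ T ⊆ R ×ˢ R := Finset.product_subset_product hTsub hTsub
  set D := (R ×ˢ R) \ (T ×ˢ T) with hD
  have hmat : ((n : ℝ))⁻¹ • covMatrix Pr (fun ω =>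
        ∑ j ∈ Finset.range k, ∑ i ∈ Finset.range ℓ, X (j * (ℓ + M) + i) ω)
      - ((n : ℝ))⁻¹ • covMatrix Pr (fun ω => ∑ i ∈ R, X i ω)
      = (-((n : ℝ))⁻¹) • ∑ p ∈ D, cmat Pr (X p.1) (X p.2) := by
    rw [hre, covMatrix_sum T X h2 h0, covMatrix_sum R X h2 h0, ← hTT, ← hRR,
      ← Finset.sum_sdiff hsubTT]
    module
  rw [hmat, _root_.map_smul, map_sum]
  have hnR : ‖(-((n : ℝ))⁻¹)‖ = ((n : ℝ))⁻¹ := by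
    rw [norm_neg, Real.norm_eq_abs, abs_inv, Nat.abs_cast]
  have hns := norm_smul (-((n : ℝ))⁻¹)
    (∑ p ∈ D, Matrix.toEuclideanCLM (𝕜 := ℝ) (cmat Pr (X p.1) (X p.2)))
  rw [hns, hnR]
  -- bound the norm of the sum
  set w : ℕ × ℕ → ℝ := fun p => if |(p.1 : ℤ) - (p.2 : ℤ)| ≤ (M : ℤ) then σ ^ 2 else 0 with hw
  have hwnn : ∀ p, 0 ≤ w p := by
    intro p
    rw [hw]
    dsimp only
    split <;> simp [hσ2]
  have hterm : ∀ p ∈ D, ‖Matrix.toEuclideanCLM (𝕜 := ℝ) (cmat Pr (X p.1) (X p.2))‖ ≤ w p := by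
    intro p _
    by_cases hc : |(p.1 : ℤ) - (p.2 : ℤ)| ≤ (M : ℤ)
    · rw [hw]
      dsimp only
      rw [if_pos hc]
      exact cmat_norm_le (h2 p.1) (h2 p.2) (σ ^ 2) (hσ p.1) (hσ p.2)
    · rw [cmat_eq_zero hdep hmeas h2 h0 (lt_of_not_ge hc), map_zero, norm_zero]
      exact hwnn p
  have hsum1 : ‖∑ p ∈ D, Matrix.toEuclideanCLM (𝕜 := ℝ) (cmat Pr (X p.1) (X p.2))‖
      ≤ ∑ p ∈ D, w p :=
    le_trans (norm_sum_le _ _) (Finset.sum_le_sum hterm)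
  -- count
  set S1 := (R \ T) ×ˢ R with hS1
  set S2 := R ×ˢ (R \ T) with hS2
  have hDsub : D ⊆ S1 ∪ S2 := by
    intro p hp
    simp only [hD, hS1, hS2, Finset.mem_sdiff, Finset.mem_product, Finset.mem_union] at hp ⊢
    tauto
  have hsum2 : ∑ p ∈ D, w p ≤ ∑ p ∈ S1, w p + ∑ p ∈ S2, w p := by
    have hU : ∑ p ∈ D, w p ≤ ∑ p ∈ S1 ∪ S2, w p :=
      Finset.sum_le_sum_of_subset_of_nonneg hDsub fun p _ _ => hwnn p
    have hUI := Finset.sum_union_inter (s₁ := S1) (s₂ := S2) (f := w)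
    have hInn : 0 ≤ ∑ p ∈ S1 ∩ S2, w p := Finset.sum_nonneg fun p _ => hwnn p
    linarith
  have hrow : ∀ i : ℕ, ∑ j ∈ R, w (i, j) ≤ (2 * M + 1 : ℝ) * σ ^ 2 := by
    intro i
    exact row_bound n M i (σ ^ 2) hσ2
  have hcol : ∀ j : ℕ, ∑ i ∈ R, w (i, j) ≤ (2 * M + 1 : ℝ) * σ ^ 2 := by
    intro j
    have hcongr : ∀ i : ℕ, w (i, j)
        = (if |(j : ℤ) - (i : ℤ)| ≤ (M : ℤ) then σ ^ 2 else 0) := by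
      intro i
      rw [hw]
      dsimp only
      rw [abs_sub_comm]
    calc ∑ i ∈ R, w (i, j)
        = ∑ i ∈ R, (if |(j : ℤ) - (i : ℤ)| ≤ (M : ℤ) then σ ^ 2 else 0) :=
          Finset.sum_congr rfl fun i _ => hcongr i
      _ ≤ (2 * M + 1 : ℝ) * σ ^ 2 := row_bound n M j (σ ^ 2) hσ2
  have hS1b : ∑ p ∈ S1, w p ≤ ((n - k * ℓ : ℕ) : ℝ) * ((2 * M + 1 : ℝ) * σ ^ 2) := by
    rw [hS1, Finset.sum_product]
    calc ∑ i ∈ R \ T, ∑ j ∈ R, w (i, j)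
        ≤ ∑ i ∈ R \ T, (2 * M + 1 : ℝ) * σ ^ 2 := Finset.sum_le_sum fun i _ => hrow i
      _ = ((R \ T).card : ℝ) * ((2 * M + 1 : ℝ) * σ ^ 2) := by
          rw [Finset.sum_const, nsmul_eq_mul]
      _ = ((n - k * ℓ : ℕ) : ℝ) * ((2 * M + 1 : ℝ) * σ ^ 2) := by rw [hcardRT]
  have hS2b : ∑ p ∈ S2, w p ≤ ((n - k * ℓ : ℕ) : ℝ) * ((2 * M + 1 : ℝ) * σ ^ 2) := by
    rw [hS2, Finset.sum_product]
    rw [Finset.sum_comm]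
    calc ∑ j ∈ R \ T, ∑ i ∈ R, w (i, j)
        ≤ ∑ j ∈ R \ T, (2 * M + 1 : ℝ) * σ ^ 2 := Finset.sum_le_sum fun j _ => hcol j
      _ = ((R \ T).card : ℝ) * ((2 * M + 1 : ℝ) * σ ^ 2) := by
          rw [Finset.sum_const, nsmul_eq_mul]
      _ = ((n - k * ℓ : ℕ) : ℝ) * ((2 * M + 1 : ℝ) * σ ^ 2) := by rw [hcardRT]
  -- final arithmetic
  set r := n - k * ℓ with hr
  have hnat : 2 * r * (2 * M + 1) * ℓ
      ≤ 8 * (2 * M + 1) ^ 2 * n + 8 * ℓ ^ 2 * (2 * M + 1) := by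
    have hdm2 : k * (ℓ + M) + n % (ℓ + M) = n := by
      rw [mul_comm]
      exact Nat.div_add_mod n (ℓ + M)
    have hslt : n % (ℓ + M) < ℓ + M := Nat.mod_lt _ (by omega)
    have hkl : k * ℓ ≤ n := by
      have h := Nat.mul_le_mul_left k (show ℓ ≤ ℓ + M by omega)
      nlinarith [hdm2]
    have e1 : r = k * M + n % (ℓ + M) := by
      have h2' : k * (ℓ + M) = k * ℓ + k * M := by ring
      omega
    rw [e1]
    have h5 : k * ℓ * (M * (2 * M + 1)) ≤ n * (M * (2 * M + 1)) :=
      Nat.mul_le_mul_right _ hkl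
    have h6 : n % (ℓ + M) * (ℓ * (2 * M + 1)) ≤ (ℓ + M) * (ℓ * (2 * M + 1)) :=
      Nat.mul_le_mul_right _ (by omega)
    have h7 : M * (ℓ * (2 * M + 1)) ≤ ℓ * (ℓ * (2 * M + 1)) :=
      Nat.mul_le_mul_right _ hMℓ
    nlinarith [h5, h6, h7]
  have hn' : (0 : ℝ) < n := by exact_mod_cast hn
  have hℓ' : (0 : ℝ) < ℓ := by exact_mod_cast hℓ
  have htotal : ‖∑ p ∈ D, Matrix.toEuclideanCLM (𝕜 := ℝ) (cmat Pr (X p.1) (X p.2))‖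
      ≤ 2 * (r : ℝ) * (2 * M + 1) * σ ^ 2 := by
    calc ‖∑ p ∈ D, Matrix.toEuclideanCLM (𝕜 := ℝ) (cmat Pr (X p.1) (X p.2))‖
        ≤ ∑ p ∈ D, w p := hsum1
      _ ≤ ∑ p ∈ S1, w p + ∑ p ∈ S2, w p := hsum2
      _ ≤ ((r : ℕ) : ℝ) * ((2 * M + 1 : ℝ) * σ ^ 2)
          + ((r : ℕ) : ℝ) * ((2 * M + 1 : ℝ) * σ ^ 2) := add_le_add hS1b hS2b
      _ = 2 * (r : ℝ) * (2 * M + 1) * σ ^ 2 := by ring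
  calc ((n : ℝ))⁻¹ * ‖∑ p ∈ D, Matrix.toEuclideanCLM (𝕜 := ℝ) (cmat Pr (X p.1) (X p.2))‖
      ≤ ((n : ℝ))⁻¹ * (2 * (r : ℝ) * (2 * M + 1) * σ ^ 2) := by
        exact mul_le_mul_of_nonneg_left htotal (by positivity)
    _ ≤ 8 * σ ^ 2 * (((2 * M + 1 : ℝ)) ^ 2 / ℓ + (ℓ : ℝ) * (2 * M + 1) / n) := by
        have hcast : (2 * (r : ℝ) * (2 * M + 1) * ℓ : ℝ)
            ≤ 8 * (2 * M + 1) ^ 2 * n + 8 * (ℓ : ℝ) ^ 2 * (2 * M + 1) := by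
          exact_mod_cast hnat
        rw [show ((2 * M + 1 : ℝ)) ^ 2 / ℓ + (ℓ : ℝ) * (2 * M + 1) / n
            = ((2 * M + 1 : ℝ) ^ 2 * n + ℓ ^ 2 * (2 * M + 1)) / (ℓ * n) by
          field_simp]
        rw [inv_mul_eq_div, ← mul_div_assoc, div_le_div_iff₀ hn' (by positivity)]
        nlinarith [mul_le_mul_of_nonneg_left (mul_le_mul_of_nonneg_left hcast hσ2) hn'.le,
          mul_pos hn' hℓ', sq_nonneg ((M : ℝ))]
end

section
/- Let {Λ_i}_{i≥1} be a sequence of nonnegative integer-valued random variables such that {Λ_i}_{i≥2} are i.i.d. with mean μ ∈ (0,∞) and there exist θ > 0 with sup_i E[e^{θΛ_i}] < ∞. Set T_k = Λ_1 + … + Λ_k and K_n = min{k ≥ 1 : T_k > n} + 1. Then for every q ≥ 1 there is a constant C_q with E|K_n − ⌊n/μ⌋|^q ≤ C_q n^{q/2} for all n ≥ 1. -/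
open MeasureTheory ProbabilityTheory
open scoped ENNReal

set_option maxHeartbeats 2000000

open MeasureTheory ProbabilityTheory Real Set
open scoped ENNReal

/-- `e^y ≤ 1 + y + y² e^y` for `y ≥ 0`. -/
lemma exp_le_one_add_add_sq_mul_exp {y : ℝ} (hy : 0 ≤ y) :
    Real.exp y ≤ 1 + y + y ^ 2 * Real.exp y := by
  rcases le_or_gt 1 y with h1 | h1
  · have hy2 : 1 ≤ y ^ 2 := by nlinarith
    have h2 : Real.exp y ≤ y ^ 2 * Real.exp y :=
      le_mul_of_one_le_left (Real.exp_pos y).le hy2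
    nlinarith
  · -- y < 1 : use (1 - y) e^y ≤ 1
    have h2 : 1 - y ≤ Real.exp (-y) := by
      have := Real.add_one_le_exp (-y)
      linarith
    have h3 : (1 - y) * Real.exp y ≤ 1 := by
      have := mul_le_mul_of_nonneg_right h2 (Real.exp_pos y).le
      rwa [← Real.exp_add, neg_add_cancel, Real.exp_zero] at this
    nlinarith [Real.exp_pos y]

/-- `e^{-y} ≤ 1 - y + y²` for `y ≥ 0`. -/
lemma exp_neg_le_one_sub_add_sq {y : ℝ} (hy : 0 ≤ y) :
    Real.exp (-y) ≤ 1 - y + y ^ 2 := by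
  have h2 : (y + 1) * Real.exp (-y) ≤ 1 := by
    have := Real.add_one_le_exp y
    have := mul_le_mul_of_nonneg_right (by linarith : y + 1 ≤ Real.exp y) (Real.exp_pos (-y)).le
    rwa [← Real.exp_add, add_neg_cancel, Real.exp_zero] at this
  nlinarith [Real.exp_pos (-y), sq_nonneg y]

/-- `x² ≤ (16/θ²) e^{θx/2}` for `x ≥ 0`, `θ > 0`. -/
lemma sq_le_exp_half {θ x : ℝ} (hθ : 0 < θ) (hx : 0 ≤ x) :
    x ^ 2 ≤ 16 / θ ^ 2 * Real.exp (θ * x / 2) := by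
  have hs : θ * x / 4 ≤ Real.exp (θ * x / 4) := by
    have := Real.add_one_le_exp (θ * x / 4); linarith
  have hsq : (θ * x / 4) ^ 2 ≤ Real.exp (θ * x / 4) ^ 2 := by
    have h0 : 0 ≤ θ * x / 4 := by positivity
    exact pow_le_pow_left₀ h0 hs 2
  have he : Real.exp (θ * x / 4) ^ 2 = Real.exp (θ * x / 2) := by
    rw [← Real.exp_nat_mul]; ring_nf
  rw [he] at hsq
  have hθ2 : (0:ℝ) < θ ^ 2 := by positivity
  have key : θ ^ 2 * x ^ 2 ≤ 16 * Real.exp (θ * x / 2) := by nlinarith [hsq]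
  rw [div_mul_eq_mul_div, le_div_iff₀ hθ2]
  nlinarith [key]

/-- characterization of `sInf` on `ℕ`. -/
lemma nat_sInf_eq_iff {A : Set ℕ} {j : ℕ} :
    sInf A = j ↔ ((j ∈ A ∧ ∀ i < j, i ∉ A) ∨ (j = 0 ∧ A = ∅)) := by
  constructor
  · intro h
    rcases eq_empty_or_nonempty A with hA | hA
    · right; exact ⟨by simpa [hA, Nat.sInf_empty] using h.symm, hA⟩
    · left
      refine ⟨h ▸ Nat.sInf_mem hA, fun i hi => Nat.notMem_of_lt_sInf (h ▸ hi)⟩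
  · rintro (⟨hj, hmin⟩ | ⟨hj, hA⟩)
    · refine le_antisymm (Nat.sInf_le hj) ?_
      by_contra hlt
      push_neg at hlt
      rcases eq_empty_or_nonempty A with hA | hA
      · simp [hA] at hj
      · exact hmin _ hlt (Nat.sInf_mem hA)
    · simp [hj, hA, Nat.sInf_empty]

lemma measurable_nat_fun {Ω : Type*} [MeasurableSpace Ω] {β : Type*} [MeasurableSpace β]
    {f : Ω → ℕ} (hf : Measurable f) (g : ℕ → β) : Measurable fun ω => g (f ω) :=
  (measurable_from_top (f := g)).comp hf

lemma exp_integrable' {Ω : Type*} [MeasurableSpace Ω] (Pr : Measure Ω) [IsProbabilityMeasure Pr]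
    (Λ : ℕ → Ω → ℕ) (hmeas : ∀ i, Measurable (Λ i))
    (θ B : ℝ) (hθ : 0 < θ)
    (hexp : ∀ i, ∫⁻ ω, ENNReal.ofReal (Real.exp (θ * Λ i ω)) ∂Pr ≤ ENNReal.ofReal B)
    (i : ℕ) {t : ℝ} (ht0 : 0 ≤ t) (htθ : t ≤ θ) :
    Integrable (fun ω => Real.exp (t * (Λ i ω : ℝ))) Pr ∧
      ∫ ω, Real.exp (t * (Λ i ω : ℝ)) ∂Pr ≤ B := by
  have hYm : Measurable fun ω => ((Λ i ω : ℝ)) := measurable_nat_fun (hmeas i) _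
  have hmono : ∀ ω, Real.exp (t * (Λ i ω : ℝ)) ≤ Real.exp (θ * (Λ i ω : ℝ)) := fun ω =>
    Real.exp_le_exp.2 (mul_le_mul_of_nonneg_right htθ (Nat.cast_nonneg _))
  have hfm : Measurable fun ω => Real.exp (t * (Λ i ω : ℝ)) := (hYm.const_mul t).exp
  have hθm : Measurable fun ω => Real.exp (θ * (Λ i ω : ℝ)) := (hYm.const_mul θ).exp
  -- integrability of the θ-exponential
  have hθint : Integrable (fun ω => Real.exp (θ * (Λ i ω : ℝ))) Pr := by
    refine ⟨hθm.aestronglyMeasurable, ?_⟩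
    rw [hasFiniteIntegral_iff_ofReal (ae_of_all _ fun ω => (Real.exp_pos _).le)]
    exact lt_of_le_of_lt (hexp i) ENNReal.ofReal_lt_top
  have hint : Integrable (fun ω => Real.exp (t * (Λ i ω : ℝ))) Pr := by
    refine hθint.mono' hfm.aestronglyMeasurable (ae_of_all _ fun ω => ?_)
    rw [Real.norm_eq_abs, abs_of_pos (Real.exp_pos _)]; exact hmono ω
  refine ⟨hint, ?_⟩
  have h1 : ∫ ω, Real.exp (t * (Λ i ω : ℝ)) ∂Pr ≤ ∫ ω, Real.exp (θ * (Λ i ω : ℝ)) ∂Pr :=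
    integral_mono hint hθint hmono
  have hB0 : (0:ℝ) ≤ B := by
    have h1 : (1:ℝ≥0∞) ≤ ∫⁻ ω, ENNReal.ofReal (Real.exp (θ * Λ i ω)) ∂Pr := by
      calc (1:ℝ≥0∞) = ∫⁻ _, 1 ∂Pr := by simp
      _ ≤ _ := lintegral_mono fun ω => by
          rw [ENNReal.one_le_ofReal]
          exact Real.one_le_exp (by positivity)
    have := ENNReal.one_le_ofReal.1 (h1.trans (hexp i))
    linarith
  have h2 : ∫ ω, Real.exp (θ * (Λ i ω : ℝ)) ∂Pr ≤ B := by
    rw [← ENNReal.ofReal_le_ofReal_iff hB0,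
      ofReal_integral_eq_lintegral_ofReal hθint (ae_of_all _ fun ω => (Real.exp_pos _).le)]
    exact hexp i
  linarith
section A
variable {Ω : Type*} [MeasurableSpace Ω] (Pr : Measure Ω) [IsProbabilityMeasure Pr]
  (X : Ω → ℝ) (hX : Measurable X) (hXnn : ∀ ω, 0 ≤ X ω)
  (θ B : ℝ) (hθ : 0 < θ)
  (hint : Integrable (fun ω => Real.exp (θ * X ω)) Pr)
  (hB : ∫ ω, Real.exp (θ * X ω) ∂Pr ≤ B)
  (hL3 : ∀ x : ℝ, 0 ≤ x → x ^ 2 ≤ 16 / θ ^ 2 * Real.exp (θ * x / 2))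

include hX hXnn hθ hint hB hL3 in
lemma sq_int : Integrable (fun ω => X ω ^ 2) Pr ∧ ∫ ω, X ω ^ 2 ∂Pr ≤ 16 * B / θ ^ 2 := by
  have hbd : ∀ ω, X ω ^ 2 ≤ 16 / θ ^ 2 * Real.exp (θ * X ω) := fun ω => by
    refine (hL3 _ (hXnn ω)).trans ?_
    have : Real.exp (θ * X ω / 2) ≤ Real.exp (θ * X ω) := by
      apply Real.exp_le_exp.2
      have := mul_nonneg hθ.le (hXnn ω)
      linarith
    have h16 : (0:ℝ) ≤ 16 / θ ^ 2 := by positivity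
    nlinarith [this]
  have hmeas2 : Measurable fun ω => X ω ^ 2 := hX.pow_const 2
  have hI : Integrable (fun ω => X ω ^ 2) Pr := by
    refine (hint.const_mul (16 / θ ^ 2)).mono' hmeas2.aestronglyMeasurable
      (ae_of_all _ fun ω => ?_)
    rw [Real.norm_eq_abs, abs_of_nonneg (sq_nonneg _)]
    exact hbd ω
  refine ⟨hI, ?_⟩
  calc ∫ ω, X ω ^ 2 ∂Pr ≤ ∫ ω, 16 / θ ^ 2 * Real.exp (θ * X ω) ∂Pr :=
        integral_mono hI (hint.const_mul _) hbd
  _ = 16 / θ ^ 2 * ∫ ω, Real.exp (θ * X ω) ∂Pr := integral_const_mul _ _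
  _ ≤ 16 / θ ^ 2 * B := by
      have h16 : (0:ℝ) ≤ 16 / θ ^ 2 := by positivity
      exact mul_le_mul_of_nonneg_left hB h16
  _ = 16 * B / θ ^ 2 := by ring

include hX hXnn hθ hint in
lemma lin_int : Integrable X Pr := by
  have hbd : ∀ ω, X ω ≤ 1 / θ * Real.exp (θ * X ω) := fun ω => by
    have h := Real.add_one_le_exp (θ * X ω)
    have h2 : θ * X ω ≤ Real.exp (θ * X ω) := by linarith
    rw [div_mul_eq_mul_div, le_div_iff₀ hθ]
    linarith [h2]
  refine (hint.const_mul (1 / θ)).mono' hX.aestronglyMeasurable (ae_of_all _ fun ω => ?_)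
  rw [Real.norm_eq_abs, abs_of_nonneg (hXnn ω)]
  exact hbd ω

end A

section B
variable {Ω : Type*} [MeasurableSpace Ω] (Pr : Measure Ω) [IsProbabilityMeasure Pr]
  (X : Ω → ℝ) (hX : Measurable X) (hXnn : ∀ ω, 0 ≤ X ω)
  (θ B : ℝ) (hθ : 0 < θ)
  (hint : Integrable (fun ω => Real.exp (θ * X ω)) Pr)
  (hB : ∫ ω, Real.exp (θ * X ω) ∂Pr ≤ B)
  (hL3 : ∀ x : ℝ, 0 ≤ x → x ^ 2 ≤ 16 / θ ^ 2 * Real.exp (θ * x / 2))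
  (hL1 : ∀ y : ℝ, 0 ≤ y → Real.exp y ≤ 1 + y + y ^ 2 * Real.exp y)
  (hL2 : ∀ y : ℝ, 0 ≤ y → Real.exp (-y) ≤ 1 - y + y ^ 2)

include hX hXnn hθ hint hB hL3 hL1 in
lemma mgf_up_bound {t : ℝ} (ht0 : 0 ≤ t) (htθ : t ≤ θ / 2) :
    mgf X Pr t ≤ Real.exp (t * (∫ ω, X ω ∂Pr) + t ^ 2 * (16 * B / θ ^ 2)) := by
  have hB0 : (0:ℝ) ≤ B := le_trans (by positivity) hB
  have hbd : ∀ ω, Real.exp (t * X ω) ≤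
      1 + t * X ω + t ^ 2 * (16 / θ ^ 2) * Real.exp (θ * X ω) := by
    intro ω
    set x := X ω with hx
    have hxnn : 0 ≤ x := hXnn ω
    have h1 := hL1 (t * x) (mul_nonneg ht0 hxnn)
    have h2 : Real.exp (t * x) ≤ Real.exp (θ * x / 2) := by
      apply Real.exp_le_exp.2
      nlinarith [htθ, hxnn]
    have h3 := hL3 x hxnn
    have key : (t * x) ^ 2 * Real.exp (t * x) ≤
        t ^ 2 * (16 / θ ^ 2) * Real.exp (θ * x) := by
      have e1 : (t * x) ^ 2 * Real.exp (t * x) ≤ t ^ 2 * x ^ 2 * Real.exp (θ * x / 2) := by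
        have : (t*x)^2 = t^2 * x^2 := by ring
        rw [this]
        exact mul_le_mul_of_nonneg_left h2 (by positivity)
      have e2 : t ^ 2 * x ^ 2 * Real.exp (θ * x / 2) ≤
          t ^ 2 * (16 / θ ^ 2 * Real.exp (θ * x / 2)) * Real.exp (θ * x / 2) := by
        have := mul_le_mul_of_nonneg_left h3 (sq_nonneg t)
        exact mul_le_mul_of_nonneg_right (by nlinarith [Real.exp_pos (θ*x/2)]) (Real.exp_pos _).le
      have e3 : Real.exp (θ * x / 2) * Real.exp (θ * x / 2) = Real.exp (θ * x) := by
        rw [← Real.exp_add]; ring_nf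
      calc (t * x) ^ 2 * Real.exp (t * x) ≤ _ := e1
      _ ≤ _ := e2
      _ = t ^ 2 * (16 / θ ^ 2) * Real.exp (θ * x) := by rw [← e3]; ring
    linarith
  have hXint : Integrable X Pr := lin_int Pr X hX hXnn θ hθ hint
  have htint : Integrable (fun ω => Real.exp (t * X ω)) Pr := by
    refine hint.mono' ((hX.const_mul t).exp).aestronglyMeasurable (ae_of_all _ fun ω => ?_)
    rw [Real.norm_eq_abs, abs_of_pos (Real.exp_pos _)]
    exact Real.exp_le_exp.2 (mul_le_mul_of_nonneg_right (by linarith) (hXnn ω))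
  have hRint : Integrable (fun ω => 1 + t * X ω + t ^ 2 * (16 / θ ^ 2) * Real.exp (θ * X ω)) Pr :=
    ((integrable_const 1).add (hXint.const_mul t)).add (hint.const_mul _)
  have i1 : Integrable (fun ω => 1 + t * X ω) Pr := (integrable_const 1).add (hXint.const_mul t)
  have step : mgf X Pr t ≤ 1 + t * (∫ ω, X ω ∂Pr) + t ^ 2 * (16 * B / θ ^ 2) := by
    have := integral_mono htint hRint hbd
    rw [mgf]
    refine this.trans ?_
    rw [integral_add i1 (hint.const_mul _),
      integral_add (integrable_const 1) (hXint.const_mul t), integral_const,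
      integral_const_mul, integral_const_mul]
    simp only [measure_univ, probReal_univ, ENNReal.toReal_one, smul_eq_mul, one_mul]
    have : t ^ 2 * (16 / θ ^ 2) * ∫ ω, Real.exp (θ * X ω) ∂Pr ≤ t ^ 2 * (16 * B / θ ^ 2) := by
      have h := mul_le_mul_of_nonneg_left hB (by positivity : (0:ℝ) ≤ t ^ 2 * (16 / θ ^ 2))
      calc t ^ 2 * (16 / θ ^ 2) * ∫ ω, Real.exp (θ * X ω) ∂Pr ≤ t ^ 2 * (16 / θ ^ 2) * B := h
      _ = t ^ 2 * (16 * B / θ ^ 2) := by ring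
    linarith
  refine step.trans ?_
  have := Real.add_one_le_exp (t * (∫ ω, X ω ∂Pr) + t ^ 2 * (16 * B / θ ^ 2))
  linarith

include hX hXnn hθ hint hB hL3 hL2 in
lemma mgf_down_bound {t : ℝ} (ht0 : 0 ≤ t) :
    mgf X Pr (-t) ≤ Real.exp (-(t * (∫ ω, X ω ∂Pr)) + t ^ 2 * (16 * B / θ ^ 2)) := by
  obtain ⟨hsqint, hsqB⟩ := sq_int Pr X hX hXnn θ B hθ hint hB hL3
  have hXint : Integrable X Pr := lin_int Pr X hX hXnn θ hθ hint
  have hbd : ∀ ω, Real.exp (-t * X ω) ≤ 1 - t * X ω + t ^ 2 * X ω ^ 2 := by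
    intro ω
    have := hL2 (t * X ω) (mul_nonneg ht0 (hXnn ω))
    rw [neg_mul]
    refine this.trans (le_of_eq ?_)
    ring
  have htint : Integrable (fun ω => Real.exp (-t * X ω)) Pr := by
    refine (integrable_const 1).mono' ((hX.const_mul (-t)).exp).aestronglyMeasurable
      (ae_of_all _ fun ω => ?_)
    rw [Real.norm_eq_abs, abs_of_pos (Real.exp_pos _)]
    exact Real.exp_le_one_iff.2 (by nlinarith [hXnn ω])
  have hRint : Integrable (fun ω => 1 - t * X ω + t ^ 2 * X ω ^ 2) Pr :=
    ((integrable_const 1).sub (hXint.const_mul t)).add (hsqint.const_mul _)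
  have i1 : Integrable (fun ω => 1 - t * X ω) Pr := (integrable_const 1).sub (hXint.const_mul t)
  have step : mgf X Pr (-t) ≤ 1 - t * (∫ ω, X ω ∂Pr) + t ^ 2 * (16 * B / θ ^ 2) := by
    have := integral_mono htint hRint hbd
    rw [mgf]
    refine this.trans ?_
    rw [integral_add i1 (hsqint.const_mul _),
      integral_sub (integrable_const 1) (hXint.const_mul t), integral_const,
      integral_const_mul, integral_const_mul]
    simp only [measure_univ, probReal_univ, ENNReal.toReal_one, smul_eq_mul, one_mul]
    nlinarith [sq_nonneg t, hsqB]
  refine step.trans ?_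
  have := Real.add_one_le_exp (-(t * (∫ ω, X ω ∂Pr)) + t ^ 2 * (16 * B / θ ^ 2))
  linarith

end B

lemma mgf_eq_of_identDistrib {Ω : Type*} [MeasurableSpace Ω] {Pr : Measure Ω}
    {X X' : Ω → ℝ} (h : IdentDistrib X X' Pr Pr) (t : ℝ) : mgf X Pr t = mgf X' Pr t :=
  (h.comp ((measurable_id.const_mul t).exp)).integral_eq

section C
variable {Ω : Type*} [MeasurableSpace Ω] (Pr : Measure Ω) [IsProbabilityMeasure Pr]
    (Λ : ℕ → Ω → ℕ) (hmeas : ∀ i, Measurable (Λ i))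
    (hindep : iIndepFun Λ Pr)
    (hid : ∀ i : ℕ, 1 ≤ i → IdentDistrib (Λ i) (Λ 1) Pr Pr)
    (μmean : ℝ) (hμpos : 0 < μmean)
    (hμ : ∫ ω, (Λ 1 ω : ℝ) ∂Pr = μmean)
    (θ B : ℝ) (hθ : 0 < θ)
    (hexp : ∀ i, ∫⁻ ω, ENNReal.ofReal (Real.exp (θ * Λ i ω)) ∂Pr ≤ ENNReal.ofReal B)

include hexp hθ in
lemma B_ge_one : (1:ℝ) ≤ B := by
  have h1 : (1:ℝ≥0∞) ≤ ∫⁻ ω, ENNReal.ofReal (Real.exp (θ * Λ 0 ω)) ∂Pr := by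
    calc (1:ℝ≥0∞) = ∫⁻ _, 1 ∂Pr := by simp
    _ ≤ _ := lintegral_mono fun ω => by
        rw [ENNReal.one_le_ofReal]
        exact Real.one_le_exp (by positivity)
  exact ENNReal.one_le_ofReal.1 (h1.trans (hexp 0))

include hmeas hid hμ hθ hexp in
lemma mgf_fac_up (i : ℕ) (hi : 1 ≤ i) {t : ℝ} (ht0 : 0 ≤ t) (htθ : t ≤ θ / 2) :
    mgf (fun ω => ((Λ i ω : ℝ))) Pr t ≤
      Real.exp (t * μmean + t ^ 2 * (16 * B / θ ^ 2)) := by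
  have heq := mgf_eq_of_identDistrib
    ((hid i hi).comp (measurable_from_top (f := fun n : ℕ => (n:ℝ)))) t
  rw [show (fun n : ℕ => (n:ℝ)) ∘ (Λ i) = fun ω => ((Λ i ω : ℝ)) from rfl] at heq
  rw [show (fun n : ℕ => (n:ℝ)) ∘ (Λ 1) = fun ω => ((Λ 1 ω : ℝ)) from rfl] at heq
  rw [heq]
  have hup := mgf_up_bound Pr (fun ω => ((Λ 1 ω : ℝ))) (measurable_nat_fun (hmeas 1) _)
    (fun ω => Nat.cast_nonneg _) θ B hθ
    (exp_integrable' Pr Λ hmeas θ B hθ hexp 1 hθ.le le_rfl).1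
    (exp_integrable' Pr Λ hmeas θ B hθ hexp 1 hθ.le le_rfl).2
    (fun x hx => sq_le_exp_half hθ hx)
    (fun y hy => exp_le_one_add_add_sq_mul_exp hy) ht0 htθ
  rwa [hμ] at hup

include hmeas hid hμ hθ hexp in
lemma mgf_fac_down (i : ℕ) (hi : 1 ≤ i) {t : ℝ} (ht0 : 0 ≤ t) :
    mgf (fun ω => ((Λ i ω : ℝ))) Pr (-t) ≤
      Real.exp (-(t * μmean) + t ^ 2 * (16 * B / θ ^ 2)) := by
  have heq := mgf_eq_of_identDistrib
    ((hid i hi).comp (measurable_from_top (f := fun n : ℕ => (n:ℝ)))) (-t)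
  rw [show (fun n : ℕ => (n:ℝ)) ∘ (Λ i) = fun ω => ((Λ i ω : ℝ)) from rfl] at heq
  rw [show (fun n : ℕ => (n:ℝ)) ∘ (Λ 1) = fun ω => ((Λ 1 ω : ℝ)) from rfl] at heq
  rw [heq]
  have hdown := mgf_down_bound Pr (fun ω => ((Λ 1 ω : ℝ))) (measurable_nat_fun (hmeas 1) _)
    (fun ω => Nat.cast_nonneg _) θ B hθ
    (exp_integrable' Pr Λ hmeas θ B hθ hexp 1 hθ.le le_rfl).1
    (exp_integrable' Pr Λ hmeas θ B hθ hexp 1 hθ.le le_rfl).2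
    (fun x hx => sq_le_exp_half hθ hx)
    (fun y hy => exp_neg_le_one_sub_add_sq hy) ht0
  rwa [hμ] at hdown

include hmeas hindep hid hμ hμpos hθ hexp in
lemma chernoff_up (n k : ℕ) {t : ℝ} (ht0 : 0 ≤ t) (htθ : t ≤ θ / 2) :
    (Pr {ω | (n:ℝ) + 1 ≤ ∑ i ∈ Finset.range k, (Λ i ω : ℝ)}).toReal ≤
      Real.exp (-(t * ((n:ℝ) + 1))) *
        (B * Real.exp (k * (t * μmean + t ^ 2 * (16 * B / θ ^ 2)))) := by
  have hYm : ∀ i, Measurable fun ω => ((Λ i ω : ℝ)) := fun i =>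
    measurable_nat_fun (hmeas i) _
  have hYindep : iIndepFun (fun i (ω : Ω) => ((Λ i ω : ℝ))) Pr := by
    have := hindep.comp (fun _ (x : ℕ) => (x : ℝ)) (fun i => measurable_from_top)
    exact this
  have htθ' : t ≤ θ := htθ.trans (by linarith)
  have hYint : ∀ i, Integrable (fun ω => Real.exp (t * (Λ i ω : ℝ))) Pr := fun i =>
    (exp_integrable' Pr Λ hmeas θ B hθ hexp i ht0 htθ').1
  have hB1 : (1:ℝ) ≤ B := B_ge_one Pr Λ θ B hθ hexp
  set A := 16 * B / θ ^ 2 with hA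
  have hAnn : 0 ≤ A := by positivity
  have hexparg : 0 ≤ t * μmean + t ^ 2 * A := by
    have h1 : 0 ≤ t * μmean := mul_nonneg ht0 hμpos.le
    nlinarith [sq_nonneg t]
  have hch := measure_ge_le_exp_mul_mgf (μ := Pr)
    (X := ∑ i ∈ Finset.range k, fun ω => ((Λ i ω : ℝ))) ((n:ℝ) + 1) ht0
    (hYindep.integrable_exp_mul_sum hYm (fun i _ => hYint i))
  rw [hYindep.mgf_sum hYm] at hch
  have hset : {ω | (n:ℝ) + 1 ≤ ∑ i ∈ Finset.range k, (Λ i ω : ℝ)} =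
      {ω | (n:ℝ) + 1 ≤ (∑ i ∈ Finset.range k, fun ω => ((Λ i ω : ℝ))) ω} := by
    ext ω; simp [Finset.sum_apply]
  rw [hset]
  refine hch.trans ?_
  rw [neg_mul]
  refine mul_le_mul_of_nonneg_left ?_ (Real.exp_pos _).le
  -- bound the product of mgfs
  rcases Nat.eq_zero_or_pos k with hk | hk
  · subst hk
    simpa using hB1
  obtain ⟨k', rfl⟩ : ∃ k', k = k' + 1 := ⟨k - 1, (Nat.succ_pred_eq_of_pos hk).symm⟩
  rw [Finset.prod_range_succ']
  have hfac0 : mgf (fun ω => ((Λ 0 ω : ℝ))) Pr t ≤ B :=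
    (exp_integrable' Pr Λ hmeas θ B hθ hexp 0 ht0 htθ').2
  have hfac1 : ∏ i ∈ Finset.range k', mgf (fun ω => ((Λ (i+1) ω : ℝ))) Pr t ≤
      Real.exp ((k':ℝ) * (t * μmean + t ^ 2 * A)) := by
    calc ∏ i ∈ Finset.range k', mgf (fun ω => ((Λ (i+1) ω : ℝ))) Pr t
        ≤ ∏ _i ∈ Finset.range k', Real.exp (t * μmean + t ^ 2 * A) :=
          Finset.prod_le_prod (fun i _ => mgf_nonneg)
            (fun i _ => mgf_fac_up Pr Λ hmeas hid μmean hμ θ B hθ hexp (i+1)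
              (Nat.succ_le_succ (Nat.zero_le _)) ht0 htθ)
    _ = Real.exp ((k':ℝ) * (t * μmean + t ^ 2 * A)) := by
        rw [Finset.prod_const, Finset.card_range, ← Real.exp_nat_mul]
  have hk'le : Real.exp ((k':ℝ) * (t * μmean + t ^ 2 * A)) ≤
      Real.exp (((k' + 1 : ℕ):ℝ) * (t * μmean + t ^ 2 * A)) := by
    apply Real.exp_le_exp.2
    have : (k':ℝ) ≤ ((k' + 1 : ℕ):ℝ) := by push_cast; linarith
    nlinarith [hexparg]
  calc (∏ i ∈ Finset.range k', mgf (fun ω => ((Λ (i+1) ω : ℝ))) Pr t) *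
        mgf (fun ω => ((Λ 0 ω : ℝ))) Pr t
      ≤ Real.exp ((k':ℝ) * (t * μmean + t ^ 2 * A)) * B := by
        have h1 := mgf_nonneg (X := fun ω => ((Λ 0 ω : ℝ))) (μ := Pr) (t := t)
        have h2 : (0:ℝ) ≤ ∏ i ∈ Finset.range k', mgf (fun ω => ((Λ (i+1) ω : ℝ))) Pr t :=
          Finset.prod_nonneg fun i _ => mgf_nonneg
        exact mul_le_mul hfac1 hfac0 h1 (Real.exp_pos _).le
  _ ≤ B * Real.exp (((k' + 1 : ℕ):ℝ) * (t * μmean + t ^ 2 * A)) := by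
      rw [mul_comm]
      exact mul_le_mul_of_nonneg_left hk'le (by linarith)

include hmeas hindep hid hμ hθ hexp in
lemma chernoff_down (n k' : ℕ) {t : ℝ} (ht0 : 0 ≤ t) :
    (Pr {ω | ∑ i ∈ Finset.range (k' + 1), (Λ i ω : ℝ) ≤ (n:ℝ)}).toReal ≤
      Real.exp (t * n) * Real.exp ((k':ℝ) * (-(t * μmean) + t ^ 2 * (16 * B / θ ^ 2))) := by
  have hYm : ∀ i, Measurable fun ω => ((Λ i ω : ℝ)) := fun i =>
    measurable_nat_fun (hmeas i) _
  have hYindep : iIndepFun (fun i (ω : Ω) => ((Λ i ω : ℝ))) Pr := by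
    have := hindep.comp (fun _ (x : ℕ) => (x : ℝ)) (fun i => measurable_from_top)
    exact this
  set A := 16 * B / θ ^ 2 with hA
  have hSm : Measurable (∑ i ∈ Finset.range (k'+1), fun ω => ((Λ i ω : ℝ))) := by
    have : Measurable fun ω => ∑ i ∈ Finset.range (k'+1), ((Λ i ω : ℝ)) :=
      Finset.measurable_sum _ fun i _ => hYm i
    convert this using 1
    ext ω
    simp [Finset.sum_apply]
  have hSnn : ∀ ω, 0 ≤ (∑ i ∈ Finset.range (k'+1), fun ω => ((Λ i ω : ℝ))) ω := by
    intro ω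
    rw [Finset.sum_apply]
    exact Finset.sum_nonneg fun i _ => Nat.cast_nonneg _
  have hint : Integrable (fun ω => Real.exp (-t * (∑ i ∈ Finset.range (k'+1),
      fun ω => ((Λ i ω : ℝ))) ω)) Pr := by
    refine (integrable_const 1).mono' (((hSm.const_mul (-t)).exp).aestronglyMeasurable)
      (ae_of_all _ fun ω => ?_)
    rw [Real.norm_eq_abs, abs_of_pos (Real.exp_pos _)]
    exact Real.exp_le_one_iff.2 (by nlinarith [hSnn ω])
  have hch := measure_le_le_exp_mul_mgf (μ := Pr)
    (X := ∑ i ∈ Finset.range (k'+1), fun ω => ((Λ i ω : ℝ))) (n:ℝ)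
    (neg_nonpos.2 ht0) hint
  rw [hYindep.mgf_sum hYm] at hch
  have hset : {ω | ∑ i ∈ Finset.range (k' + 1), (Λ i ω : ℝ) ≤ (n:ℝ)} =
      {ω | (∑ i ∈ Finset.range (k'+1), fun ω => ((Λ i ω : ℝ))) ω ≤ (n:ℝ)} := by
    ext ω; simp [Finset.sum_apply]
  rw [hset]
  refine hch.trans ?_
  rw [neg_neg]
  refine mul_le_mul_of_nonneg_left ?_ (Real.exp_pos _).le
  rw [Finset.prod_range_succ']
  have hfac0 : mgf (fun ω => ((Λ 0 ω : ℝ))) Pr (-t) ≤ 1 := by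
    rw [mgf]
    have hint0 : Integrable (fun ω => Real.exp (-t * (Λ 0 ω : ℝ))) Pr := by
      refine (integrable_const 1).mono' (((hYm 0).const_mul (-t)).exp).aestronglyMeasurable
        (ae_of_all _ fun ω => ?_)
      rw [Real.norm_eq_abs, abs_of_pos (Real.exp_pos _)]
      exact Real.exp_le_one_iff.2 (by nlinarith [Nat.cast_nonneg (α := ℝ) (Λ 0 ω)])
    calc ∫ ω, Real.exp (-t * (Λ 0 ω : ℝ)) ∂Pr ≤ ∫ _ω, (1:ℝ) ∂Pr := by
          refine integral_mono hint0 (integrable_const 1) fun ω => ?_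
          exact Real.exp_le_one_iff.2 (by nlinarith [Nat.cast_nonneg (α := ℝ) (Λ 0 ω)])
    _ = 1 := by simp
  have hfac1 : ∏ i ∈ Finset.range k', mgf (fun ω => ((Λ (i+1) ω : ℝ))) Pr (-t) ≤
      Real.exp ((k':ℝ) * (-(t * μmean) + t ^ 2 * A)) := by
    calc ∏ i ∈ Finset.range k', mgf (fun ω => ((Λ (i+1) ω : ℝ))) Pr (-t)
        ≤ ∏ _i ∈ Finset.range k', Real.exp (-(t * μmean) + t ^ 2 * A) :=
          Finset.prod_le_prod (fun i _ => mgf_nonneg)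
            (fun i _ => mgf_fac_down Pr Λ hmeas hid μmean hμ θ B hθ hexp (i+1)
              (Nat.succ_le_succ (Nat.zero_le _)) ht0)
    _ = Real.exp ((k':ℝ) * (-(t * μmean) + t ^ 2 * A)) := by
        rw [Finset.prod_const, Finset.card_range, ← Real.exp_nat_mul]
  calc (∏ i ∈ Finset.range k', mgf (fun ω => ((Λ (i+1) ω : ℝ))) Pr (-t)) *
        mgf (fun ω => ((Λ 0 ω : ℝ))) Pr (-t)
      ≤ Real.exp ((k':ℝ) * (-(t * μmean) + t ^ 2 * A)) * 1 := by
        have h2 : (0:ℝ) ≤ ∏ i ∈ Finset.range k', mgf (fun ω => ((Λ (i+1) ω : ℝ))) Pr (-t) :=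
          Finset.prod_nonneg fun i _ => mgf_nonneg
        exact mul_le_mul hfac1 hfac0 mgf_nonneg (Real.exp_pos _).le
  _ = Real.exp ((k':ℝ) * (-(t * μmean) + t ^ 2 * A)) := mul_one _

end C

section D
variable {Ω : Type*} [MeasurableSpace Ω] (Λ : ℕ → Ω → ℕ) (n : ℕ)

/-- the renewal count -/
noncomputable def renewalN (ω : Ω) : ℕ := sInf {k : ℕ | 1 ≤ k ∧ n < ∑ i ∈ Finset.range k, Λ i ω}

lemma measurable_renewalN (hmeas : ∀ i, Measurable (Λ i)) :
    Measurable (renewalN Λ n) := by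
  have hS : ∀ k, Measurable fun ω => ∑ i ∈ Finset.range k, Λ i ω := fun k =>
    Finset.measurable_sum _ fun i _ => hmeas i
  have hM : ∀ k, MeasurableSet {ω : Ω | 1 ≤ k ∧ n < ∑ i ∈ Finset.range k, Λ i ω} := by
    intro k
    by_cases hk : 1 ≤ k
    · have : {ω : Ω | 1 ≤ k ∧ n < ∑ i ∈ Finset.range k, Λ i ω} =
          (fun ω => ∑ i ∈ Finset.range k, Λ i ω) ⁻¹' {m | n < m} := by
        ext ω; simp [hk]
      rw [this]
      exact hS k ((Set.to_countable _).measurableSet)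
    · have : {ω : Ω | 1 ≤ k ∧ n < ∑ i ∈ Finset.range k, Λ i ω} = ∅ := by
        ext ω; simp [hk]
      rw [this]; exact MeasurableSet.empty
  apply measurable_to_countable'
  intro j
  have hpre : renewalN Λ n ⁻¹' {j} =
      ({ω : Ω | 1 ≤ j ∧ n < ∑ i ∈ Finset.range j, Λ i ω} ∩
        ⋂ i ∈ Finset.range j, {ω : Ω | 1 ≤ i ∧ n < ∑ l ∈ Finset.range i, Λ l ω}ᶜ) ∪
      ((if j = 0 then (univ : Set Ω) else ∅) ∩
        ⋂ i, {ω : Ω | 1 ≤ i ∧ n < ∑ l ∈ Finset.range i, Λ l ω}ᶜ) := by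
    ext ω
    simp only [mem_preimage, mem_singleton_iff, renewalN, nat_sInf_eq_iff, mem_union,
      mem_inter_iff, mem_iInter, mem_compl_iff, mem_setOf_eq, Finset.mem_range]
    constructor
    · rintro (⟨hj, hmin⟩ | ⟨hj, hA⟩)
      · exact Or.inl ⟨hj, fun i hi => hmin i hi⟩
      · refine Or.inr ⟨by simp [hj], fun i => ?_⟩
        intro hmem
        have : i ∈ ({k : ℕ | 1 ≤ k ∧ n < ∑ l ∈ Finset.range k, Λ l ω} : Set ℕ) := hmem
        rw [hA] at this
        exact this
    · rintro (⟨hj, hmin⟩ | ⟨hj0, hA⟩)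
      · exact Or.inl ⟨hj, fun i hi => hmin i hi⟩
      · right
        have hj : j = 0 := by
          by_contra h; simp [h] at hj0
        refine ⟨hj, ?_⟩
        ext i
        simp only [mem_setOf_eq, mem_empty_iff_false, iff_false]
        exact hA i
  rw [hpre]
  refine MeasurableSet.union ((hM j).inter ?_) (MeasurableSet.inter ?_ ?_)
  · exact MeasurableSet.biInter (Finset.range j).countable_toSet fun i _ => (hM i).compl
  · split <;> simp
  · exact MeasurableSet.iInter fun i => (hM i).compl

lemma sum_mono_k (ω : Ω) : Monotone fun k => ∑ i ∈ Finset.range k, Λ i ω := by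
  intro a b hab
  exact Finset.sum_le_sum_of_subset (Finset.range_subset_range.2 hab)

lemma incl_up {j : ℕ} (hj : 2 ≤ j) :
    {ω : Ω | j ≤ renewalN Λ n ω} ⊆ {ω : Ω | ∑ i ∈ Finset.range (j - 1), Λ i ω ≤ n} := by
  intro ω hω
  simp only [mem_setOf_eq] at *
  by_contra h
  push_neg at h
  have hmem : (j - 1) ∈ {k : ℕ | 1 ≤ k ∧ n < ∑ i ∈ Finset.range k, Λ i ω} :=
    ⟨by omega, h⟩
  have := Nat.sInf_le hmem
  have : renewalN Λ n ω ≤ j - 1 := this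
  omega

lemma incl_down {k₀ : ℕ} :
    {ω : Ω | renewalN Λ n ω ≤ k₀ ∧ 1 ≤ renewalN Λ n ω} ⊆
      {ω : Ω | n < ∑ i ∈ Finset.range k₀, Λ i ω} ∪
        {ω : Ω | ∀ k, 1 ≤ k → ∑ i ∈ Finset.range k, Λ i ω ≤ n} := by
  intro ω hω
  obtain ⟨hle, hge⟩ := hω
  rcases eq_empty_or_nonempty {k : ℕ | 1 ≤ k ∧ n < ∑ i ∈ Finset.range k, Λ i ω} with hA | hA
  · right
    intro k hk
    by_contra h
    push_neg at h
    have : k ∈ ({k : ℕ | 1 ≤ k ∧ n < ∑ i ∈ Finset.range k, Λ i ω} : Set ℕ) := ⟨hk, h⟩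
    rw [hA] at this
    exact this
  · left
    have hmem := Nat.sInf_mem hA
    have h2 : n < ∑ i ∈ Finset.range (renewalN Λ n ω), Λ i ω := hmem.2
    exact lt_of_lt_of_le h2 (sum_mono_k Λ ω hle)

end D

-- branch A exponent inequality
lemma expA_bound {μ A ε s n mN r : ℝ} (hμ : 0 < μ) (hA : 0 ≤ A) (hε : 0 < ε)
    (hεA : ε * A ≤ μ / 2) (hs1 : 1 ≤ s) (hsq : s * s = n) (hmn : mN * μ ≤ n)
    (hnm : n < (mN + 1) * μ) (hmN : 0 ≤ mN) (hr : 5 ≤ r) :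
    (ε / s) * n + (mN + r - 3) * (-((ε / s) * μ) + (ε / s) ^ 2 * A) ≤
      4 * ε * μ + ε / 2 - ((ε * μ / 2) * r) / s := by
  have hs0 : (0:ℝ) < s := lt_of_lt_of_le one_pos hs1
  have hn0 : (0:ℝ) < n := by nlinarith
  set t := ε / s with hts
  have ht0 : 0 < t := div_pos hε hs0
  have htle : t ≤ ε := div_le_self hε.le hs1
  have hts' : t * s = ε := div_mul_cancel₀ _ hs0.ne'
  have htn : t * n = ε * s := by
    rw [← hsq, hts]; field_simp
  have hsn : s ≤ n := by nlinarith
  have h1 : t * n - (mN + r - 3) * (t * μ) ≤ t * μ * (4 - r) := by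
    have : n - (mN + r - 3) * μ ≤ (4 - r) * μ := by nlinarith
    nlinarith [this, ht0.le]
  have h2a : mN * (t ^ 2 * A) ≤ ε / 2 := by
    have ht2 : t ^ 2 = ε ^ 2 / n := by
      rw [hts, ← hsq]; field_simp
    rw [ht2]
    rw [div_mul_eq_mul_div, mul_div_assoc', div_le_iff₀ hn0]
    nlinarith [mul_le_mul_of_nonneg_left hεA (mul_nonneg hmN hε.le),
        mul_le_mul_of_nonneg_left hmn (by positivity : (0:ℝ) ≤ ε / 2)]
  have h2b : (r - 3) * (t ^ 2 * A) ≤ (t * μ / 2) * r := by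
    have htA : t * A ≤ μ / 2 := by
      calc t * A ≤ ε * A := by nlinarith
      _ ≤ μ / 2 := hεA
    have ht2A : t ^ 2 * A ≤ t * μ / 2 := by nlinarith
    nlinarith [ht2A, ht0.le, hr]
  have h2 : (mN + r - 3) * (t ^ 2 * A) ≤ ε / 2 + (t * μ / 2) * r := by
    have hx : (mN + r - 3) * (t ^ 2 * A) = mN * (t ^ 2 * A) + (r - 3) * (t ^ 2 * A) := by ring
    rw [hx]; linarith
  have hfin : t * μ / 2 * r = ((ε * μ / 2) * r) / s := by
    rw [hts]; field_simp
  nlinarith [h1, h2, htle, hμ.le, hr, ht0.le]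

-- branch B exponent inequality
lemma expB_bound {μ A ε s n mN r : ℝ} (hμ : 0 < μ) (hA : 0 ≤ A) (hε : 0 < ε)
    (hεA : ε * A ≤ μ / 2) (hs1 : 1 ≤ s) (hsq : s * s = n) (hmn : mN * μ ≤ n)
    (hmN : 0 ≤ mN) (hr : 0 ≤ r) (hrm : r + 1 ≤ mN) :
    -((ε / s) * (n + 1)) + (mN - r - 1) * ((ε / s) * μ + (ε / s) ^ 2 * A) ≤
      ε / 2 - ((ε * μ / 2) * r) / s := by
  have hs0 : (0:ℝ) < s := lt_of_lt_of_le one_pos hs1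
  have hn0 : (0:ℝ) < n := by nlinarith
  set t := ε / s with hts
  have ht0 : 0 < t := div_pos hε hs0
  have htle : t ≤ ε := div_le_self hε.le hs1
  have h1 : (mN - r - 1) * (t * μ) ≤ t * n - t * μ * r := by
    have : (mN - r - 1) * μ ≤ n - μ * r := by nlinarith
    nlinarith [this, ht0.le]
  have h2 : (mN - r - 1) * (t ^ 2 * A) ≤ ε / 2 := by
    have ht2 : t ^ 2 = ε ^ 2 / n := by
      rw [hts, ← hsq]; field_simp
    have hb : (mN - r - 1) ≤ mN := by linarith
    have hnn : 0 ≤ t ^ 2 * A := by positivity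
    calc (mN - r - 1) * (t ^ 2 * A) ≤ mN * (t ^ 2 * A) := by nlinarith
    _ ≤ ε / 2 := by
        rw [ht2, div_mul_eq_mul_div, mul_div_assoc', div_le_iff₀ hn0]
        nlinarith [mul_le_mul_of_nonneg_left hεA (mul_nonneg hmN hε.le),
        mul_le_mul_of_nonneg_left hmn (by positivity : (0:ℝ) ≤ ε / 2)]
  have hfin : t * μ * r ≥ ((ε * μ / 2) * r) / s := by
    rw [hts]
    rw [ge_iff_le, div_le_iff₀ hs0]
    have : ε / s * μ * r * s = ε * μ * r := by field_simp
    rw [this]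
    nlinarith [mul_nonneg (mul_nonneg hε.le hμ.le) hr]
  nlinarith [h1, h2, hfin, ht0.le]

section E
variable {Ω : Type*} [MeasurableSpace Ω] (Pr : Measure Ω) [IsProbabilityMeasure Pr]
    (Λ : ℕ → Ω → ℕ) (hmeas : ∀ i, Measurable (Λ i))
    (hindep : iIndepFun Λ Pr)
    (hid : ∀ i : ℕ, 1 ≤ i → IdentDistrib (Λ i) (Λ 1) Pr Pr)
    (μmean : ℝ) (hμpos : 0 < μmean)
    (hμ : ∫ ω, (Λ 1 ω : ℝ) ∂Pr = μmean)
    (θ B : ℝ) (hθ : 0 < θ)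
    (hexp : ∀ i, ∫⁻ ω, ENNReal.ofReal (Real.exp (θ * Λ i ω)) ∂Pr ≤ ENNReal.ofReal B)

include hmeas hindep hid hμ hμpos hθ hexp in
lemma empty_null (n : ℕ) :
    Pr {ω : Ω | ∀ k, 1 ≤ k → ∑ i ∈ Finset.range k, Λ i ω ≤ n} = 0 := by
  have hB1 : (1:ℝ) ≤ B := B_ge_one Pr Λ θ B hθ hexp
  set A := 16 * B / θ ^ 2 with hA
  have hA0 : 0 < A := by positivity
  set t := μmean / (2 * A) with ht
  have ht0 : 0 < t := by positivity
  have he : -(t * μmean) + t ^ 2 * A < 0 := by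
    have : t ^ 2 * A = t * μmean / 2 := by
      rw [ht]; field_simp
    rw [this]
    nlinarith [mul_pos ht0 hμpos]
  set E := {ω : Ω | ∀ k, 1 ≤ k → ∑ i ∈ Finset.range k, Λ i ω ≤ n} with hE
  have hbound : ∀ k' : ℕ, (Pr E).toReal ≤
      Real.exp (t * n) * Real.exp ((k':ℝ) * (-(t * μmean) + t ^ 2 * A)) := by
    intro k'
    have hsub : E ⊆ {ω : Ω | ∑ i ∈ Finset.range (k' + 1), (Λ i ω : ℝ) ≤ (n:ℝ)} := by
      intro ω hω
      have := hω (k' + 1) (Nat.succ_le_succ (Nat.zero_le _))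
      simp only [mem_setOf_eq]
      push_cast
      exact_mod_cast this
    refine le_trans ?_ (chernoff_down Pr Λ hmeas hindep hid μmean hμ θ B hθ hexp n k' ht0.le)
    exact ENNReal.toReal_mono (measure_ne_top _ _) (measure_mono hsub)
  have htend : Filter.Tendsto
      (fun k' : ℕ => Real.exp (t * n) * Real.exp ((k':ℝ) * (-(t * μmean) + t ^ 2 * A)))
      Filter.atTop (nhds 0) := by
    have h1 : ∀ k' : ℕ, Real.exp ((k':ℝ) * (-(t * μmean) + t ^ 2 * A)) =
        Real.exp (-(t * μmean) + t ^ 2 * A) ^ (k' : ℕ) := fun k' => by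
      rw [← Real.exp_nat_mul]
    simp_rw [h1]
    rw [show (0:ℝ) = Real.exp (t * n) * 0 by ring]
    exact (tendsto_pow_atTop_nhds_zero_of_lt_one (Real.exp_pos _).le
      (Real.exp_lt_one_iff.2 he)).const_mul _
  have h0 : (Pr E).toReal ≤ 0 := ge_of_tendsto' htend hbound
  have := ENNReal.toReal_nonneg (a := Pr E)
  have hz : (Pr E).toReal = 0 := le_antisymm h0 this
  rwa [ENNReal.toReal_eq_zero_iff, or_iff_left (measure_ne_top _ _)] at hz

include hmeas hindep hid hμ hμpos hθ hexp in
lemma renewal_tail_bound :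
    ∃ c C₀ : ℝ, 0 < c ∧ 1 ≤ C₀ ∧ ∀ n : ℕ, 1 ≤ n → ∀ r : ℕ,
      Pr {ω : Ω | r ≤ (((renewalN Λ n ω + 1 : ℕ) : ℤ) - ⌊(n:ℝ)/μmean⌋).natAbs} ≤
        ENNReal.ofReal (C₀ * Real.exp (-(c * r) / Real.sqrt n)) := by
  have hB1 : (1:ℝ) ≤ B := B_ge_one Pr Λ θ B hθ hexp
  set A := 16 * B / θ ^ 2 with hA
  have hA0 : 0 < A := by positivity
  set ε := min (θ / 2) (μmean / (2 * A)) with hε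
  have hε0 : 0 < ε := lt_min (by positivity) (by positivity)
  have hεθ : ε ≤ θ / 2 := min_le_left _ _
  have hεA : ε * A ≤ μmean / 2 := by
    have h1 : ε ≤ μmean / (2 * A) := min_le_right _ _
    rw [← le_div_iff₀ hA0]
    calc ε ≤ μmean / (2 * A) := h1
    _ = μmean / 2 / A := by ring
  set c := ε * μmean / 2 with hc
  have hc0 : 0 < c := by positivity
  set C₀ := (B + 1) * Real.exp (4 * ε * μmean + ε) with hC₀
  have hC₀1 : 1 ≤ C₀ := by
    have h1 : (1:ℝ) ≤ Real.exp (4 * ε * μmean + ε) := Real.one_le_exp (by positivity)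
    nlinarith
  refine ⟨c, C₀, hc0, hC₀1, fun n hn r => ?_⟩
  have hs1 : (1:ℝ) ≤ Real.sqrt n := by
    rw [show (1:ℝ) = Real.sqrt 1 by simp]
    exact Real.sqrt_le_sqrt (by exact_mod_cast hn)
  have hs0 : (0:ℝ) < Real.sqrt n := lt_of_lt_of_le one_pos hs1
  have hsq : Real.sqrt n * Real.sqrt n = (n:ℝ) := Real.mul_self_sqrt (Nat.cast_nonneg _)
  set s := Real.sqrt n with hsdef
  set t := ε / s with htdef
  have ht0 : 0 < t := div_pos hε0 hs0
  have htε : t ≤ ε := div_le_self hε0.le hs1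
  have htθ : t ≤ θ / 2 := htε.trans hεθ
  -- floor facts
  set m := ⌊(n:ℝ)/μmean⌋ with hm
  have hm0 : 0 ≤ m := Int.floor_nonneg.2 (by positivity)
  set mN := m.toNat with hmN
  have hmNm : (mN : ℤ) = m := Int.toNat_of_nonneg hm0
  have hmNle : (mN:ℝ) * μmean ≤ n := by
    have h1 : (m:ℝ) ≤ (n:ℝ)/μmean := Int.floor_le _
    have h2 : (mN:ℝ) = (m:ℝ) := by exact_mod_cast congrArg (Int.cast : ℤ → ℝ) hmNm
    rw [h2]
    rw [← le_div_iff₀ hμpos]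
    exact h1
  have hmNgt : (n:ℝ) < ((mN:ℝ) + 1) * μmean := by
    have h1 : (n:ℝ)/μmean < m + 1 := Int.lt_floor_add_one _
    have h2 : (mN:ℝ) = (m:ℝ) := by exact_mod_cast congrArg (Int.cast : ℤ → ℝ) hmNm
    rw [h2]
    rw [← div_lt_iff₀ hμpos] at *
    exact h1
  rcases le_or_gt r 4 with hr4 | hr4
  · -- small r : trivial bound
    have h1 : Pr {ω : Ω | r ≤ (((renewalN Λ n ω + 1 : ℕ) : ℤ) - m).natAbs} ≤ 1 :=
      prob_le_one
    refine h1.trans ?_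
    rw [← ENNReal.ofReal_one]
    apply ENNReal.ofReal_le_ofReal
    have hrc : (r:ℝ) ≤ 4 := by exact_mod_cast hr4
    have h2 : (c * r) / s ≤ 4 * c := by
      have h3 : c * r ≤ 4 * c := by nlinarith
      calc (c * r) / s ≤ c * r := div_le_self (by positivity) hs1
      _ ≤ 4 * c := h3
    have h3 : Real.exp (-(4 * c)) ≤ Real.exp (-(c * r) / s) :=
      Real.exp_le_exp.2 (by rw [neg_div]; linarith)
    have h4 : 1 ≤ C₀ * Real.exp (-(4 * c)) := by
      have he : C₀ * Real.exp (-(4 * c)) = (B + 1) * Real.exp (4 * ε * μmean + ε - 4 * c) := by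
        rw [hC₀, mul_assoc, ← Real.exp_add]
        ring_nf
      rw [he]
      have hc4 : 4 * c = 2 * ε * μmean := by rw [hc]; ring
      have hnn : 0 ≤ 4 * ε * μmean + ε - 4 * c := by
        rw [hc4]
        nlinarith [mul_nonneg hε0.le hμpos.le]
      nlinarith [Real.one_le_exp hnn]
    calc (1:ℝ) ≤ C₀ * Real.exp (-(4 * c)) := h4
    _ ≤ C₀ * Real.exp (-(c * r) / s) := by
        have hC₀0 : 0 ≤ C₀ := by linarith
        exact mul_le_mul_of_nonneg_left h3 hC₀0
  · -- large r
    have hrr : (5:ℝ) ≤ (r:ℝ) := by exact_mod_cast hr4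
    set SA := {ω : Ω | ∑ i ∈ Finset.range ((mN + r - 3) + 1), (Λ i ω : ℝ) ≤ (n:ℝ)} with hSA
    set SB := {ω : Ω | (n:ℝ) + 1 ≤ ∑ i ∈ Finset.range (mN - r - 1), (Λ i ω : ℝ)} with hSB
    set SE := {ω : Ω | ∀ k, 1 ≤ k → ∑ i ∈ Finset.range k, Λ i ω ≤ n} with hSE
    have hincl : {ω : Ω | r ≤ (((renewalN Λ n ω + 1 : ℕ) : ℤ) - m).natAbs} ⊆
        SA ∪ (SB ∪ SE) := by
      intro ω hω
      simp only [mem_setOf_eq] at hω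
      set N := renewalN Λ n ω with hN
      have hcases : mN + r ≤ N + 1 ∨ N + 1 + r ≤ mN := by omega
      rcases hcases with hcase | hcase
      · left
        have h2 : 2 ≤ mN + r - 1 := by omega
        have hNge : mN + r - 1 ≤ N := by omega
        have hsum := incl_up Λ n (j := mN + r - 1) h2 hNge
        simp only [mem_setOf_eq] at hsum
        have heq : mN + r - 1 - 1 = (mN + r - 3) + 1 := by omega
        rw [heq] at hsum
        simp only [hSA, mem_setOf_eq]
        calc ∑ i ∈ Finset.range ((mN + r - 3) + 1), (Λ i ω : ℝ)
            = ((∑ i ∈ Finset.range ((mN + r - 3) + 1), Λ i ω : ℕ) : ℝ) := by push_cast; ring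
        _ ≤ (n:ℝ) := by exact_mod_cast hsum
      · by_cases hN1 : 1 ≤ N
        · have hk : N ≤ mN - r - 1 := by omega
          have hdown := incl_down Λ n (k₀ := mN - r - 1) ⟨hk, hN1⟩
          rcases hdown with h | h
          · right; left
            simp only [mem_setOf_eq] at h
            simp only [hSB, mem_setOf_eq]
            have : n + 1 ≤ ∑ i ∈ Finset.range (mN - r - 1), Λ i ω := h
            calc (n:ℝ) + 1 = ((n + 1 : ℕ) : ℝ) := by push_cast; ring
            _ ≤ ((∑ i ∈ Finset.range (mN - r - 1), Λ i ω : ℕ) : ℝ) := by exact_mod_cast this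
            _ = ∑ i ∈ Finset.range (mN - r - 1), (Λ i ω : ℝ) := by push_cast; ring
          · right; right; exact h
        · right; right
          intro k hk
          by_contra hcon
          push_neg at hcon
          have hmem : k ∈ {k : ℕ | 1 ≤ k ∧ n < ∑ i ∈ Finset.range k, Λ i ω} := ⟨hk, hcon⟩
          have hne : {k : ℕ | 1 ≤ k ∧ n < ∑ i ∈ Finset.range k, Λ i ω}.Nonempty := ⟨k, hmem⟩
          have h1N := (Nat.sInf_mem hne).1
          have hNdef : N = sInf {k : ℕ | 1 ≤ k ∧ n < ∑ i ∈ Finset.range k, Λ i ω} := hN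
          omega
    -- bound each branch
    have hA_bound : Pr SA ≤
        ENNReal.ofReal (Real.exp (4 * ε * μmean + ε / 2) * Real.exp (-(c * r) / s)) := by
      have hch := chernoff_down Pr Λ hmeas hindep hid μmean hμ θ B hθ hexp n (mN + r - 3) ht0.le
      have hcast : ((mN + r - 3 : ℕ) : ℝ) = (mN:ℝ) + (r:ℝ) - 3 := by
        have h3 : 3 ≤ mN + r := by omega
        push_cast [Nat.cast_sub h3]
        ring
      have hexpo := expA_bound (μ := μmean) (A := A) (ε := ε) (s := s) (n := (n:ℝ))
        (mN := (mN:ℝ)) (r := (r:ℝ)) hμpos hA0.le hε0 hεA hs1 hsq hmNle hmNgt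
        (Nat.cast_nonneg _) hrr
      have hEA : Real.exp (t * n) *
            Real.exp (((mN + r - 3 : ℕ):ℝ) * (-(t * μmean) + t ^ 2 * A)) ≤
          Real.exp (4 * ε * μmean + ε / 2) * Real.exp (-(c * r) / s) := by
        rw [← Real.exp_add, ← Real.exp_add]
        apply Real.exp_le_exp.2
        rw [hcast]
        have hgoal := hexpo
        rw [htdef]
        have : -(c * (r:ℝ)) / s = -((ε * μmean / 2 * (r:ℝ)) / s) := by
          rw [hc, neg_div]
        rw [this]
        linarith [hgoal]
      calc Pr SA = ENNReal.ofReal ((Pr SA).toReal) := (ENNReal.ofReal_toReal (measure_ne_top _ _)).symm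
      _ ≤ _ := ENNReal.ofReal_le_ofReal (le_trans hch hEA)
    have hB_bound : Pr SB ≤
        ENNReal.ofReal ((B * Real.exp (ε / 2)) * Real.exp (-(c * r) / s)) := by
      rcases lt_or_ge mN (r + 1) with hm | hm
      · have hSBempty : SB = ∅ := by
          have : mN - r - 1 = 0 := by omega
          rw [hSB, this]
          ext ω
          simp only [Finset.range_zero, Finset.sum_empty, mem_setOf_eq, mem_empty_iff_false,
            iff_false, not_le]
          positivity
        rw [hSBempty]
        simp
      · have hch := chernoff_up Pr Λ hmeas hindep hid μmean hμpos hμ θ B hθ hexp n (mN - r - 1)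
          ht0.le htθ
        have hcast : ((mN - r - 1 : ℕ) : ℝ) = (mN:ℝ) - (r:ℝ) - 1 := by
          have h3 : r + 1 ≤ mN := hm
          push_cast [Nat.cast_sub (by omega : r ≤ mN), Nat.cast_sub (by omega : 1 ≤ mN - r)]
          ring
        have hexpo := expB_bound (μ := μmean) (A := A) (ε := ε) (s := s) (n := (n:ℝ))
          (mN := (mN:ℝ)) (r := (r:ℝ)) hμpos hA0.le hε0 hεA hs1 hsq hmNle
          (Nat.cast_nonneg _) (Nat.cast_nonneg _) (by exact_mod_cast hm)
        have hEB : Real.exp (-(t * ((n:ℝ) + 1))) *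
              (B * Real.exp (((mN - r - 1 : ℕ):ℝ) * (t * μmean + t ^ 2 * A))) ≤
            (B * Real.exp (ε / 2)) * Real.exp (-(c * r) / s) := by
          have hrw : Real.exp (-(t * ((n:ℝ) + 1))) *
              (B * Real.exp (((mN - r - 1 : ℕ):ℝ) * (t * μmean + t ^ 2 * A))) =
              B * Real.exp (-(t * ((n:ℝ) + 1)) +
                ((mN - r - 1 : ℕ):ℝ) * (t * μmean + t ^ 2 * A)) := by
            rw [Real.exp_add]; ring
          have hrw2 : (B * Real.exp (ε / 2)) * Real.exp (-(c * r) / s) =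
              B * Real.exp (ε / 2 + -(c * r) / s) := by
            rw [Real.exp_add]; ring
          rw [hrw, hrw2]
          apply mul_le_mul_of_nonneg_left _ (by linarith : (0:ℝ) ≤ B)
          apply Real.exp_le_exp.2
          rw [hcast, htdef]
          have : -(c * (r:ℝ)) / s = -((ε * μmean / 2 * (r:ℝ)) / s) := by
            rw [hc, neg_div]
          rw [this]
          linarith [hexpo]
        calc Pr SB = ENNReal.ofReal ((Pr SB).toReal) :=
            (ENNReal.ofReal_toReal (measure_ne_top _ _)).symm
        _ ≤ _ := ENNReal.ofReal_le_ofReal (le_trans hch hEB)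
    have hE0 : Pr SE = 0 := empty_null Pr Λ hmeas hindep hid μmean hμpos hμ θ B hθ hexp n
    calc Pr {ω : Ω | r ≤ (((renewalN Λ n ω + 1 : ℕ) : ℤ) - m).natAbs}
        ≤ Pr (SA ∪ (SB ∪ SE)) := measure_mono hincl
    _ ≤ Pr SA + Pr (SB ∪ SE) := measure_union_le _ _
    _ ≤ Pr SA + (Pr SB + Pr SE) := add_le_add le_rfl (measure_union_le _ _)
    _ = Pr SA + Pr SB := by rw [hE0, add_zero]
    _ ≤ ENNReal.ofReal (Real.exp (4 * ε * μmean + ε / 2) * Real.exp (-(c * r) / s)) +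
        ENNReal.ofReal ((B * Real.exp (ε / 2)) * Real.exp (-(c * r) / s)) :=
          add_le_add hA_bound hB_bound
    _ = ENNReal.ofReal (Real.exp (4 * ε * μmean + ε / 2) * Real.exp (-(c * r) / s) +
        (B * Real.exp (ε / 2)) * Real.exp (-(c * r) / s)) := by
          rw [ENNReal.ofReal_add (by positivity) (by positivity)]
    _ ≤ ENNReal.ofReal (C₀ * Real.exp (-(c * r) / s)) := by
        apply ENNReal.ofReal_le_ofReal
        have h1 : Real.exp (4 * ε * μmean + ε / 2) ≤ Real.exp (4 * ε * μmean + ε) :=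
          Real.exp_le_exp.2 (by linarith)
        have h2 : B * Real.exp (ε / 2) ≤ B * Real.exp (4 * ε * μmean + ε) := by
          apply mul_le_mul_of_nonneg_left _ (by linarith : (0:ℝ) ≤ B)
          apply Real.exp_le_exp.2
          nlinarith [mul_nonneg hε0.le hμpos.le]
        have h3 : (0:ℝ) ≤ Real.exp (-(c * r) / s) := (Real.exp_pos _).le
        rw [hC₀]
        nlinarith [h1, h2, h3]
end E


/-- Moment bounds for the renewal count: let `{Λ_i}_{i≥1}` be nonnegative integer-valued,
`{Λ_i}_{i≥2}` i.i.d. with mean `μ ∈ (0,∞)`, the whole family independent, with a uniform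
exponential moment `sup_i E[e^{θΛ_i}] ≤ B < ∞` for some `θ > 0`.  With
`T_k = Λ_1 + ⋯ + Λ_k` and `K_n = min{k ≥ 1 : T_k > n} + 1`, for every `q ≥ 1` there is a
constant `C_q` with `E|K_n − ⌊n/μ⌋|^q ≤ C_q n^{q/2}` for all `n ≥ 1`.
(Indices shifted: `Λ i` below denotes the paper's `Λ_{i+1}`, so `Λ 0` is `Λ_1`.) -/
theorem renewal_count_moment
    {Ω : Type*} [MeasurableSpace Ω] (Pr : Measure Ω) [IsProbabilityMeasure Pr]
    (Λ : ℕ → Ω → ℕ) (hmeas : ∀ i, Measurable (Λ i))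
    (hindep : iIndepFun Λ Pr)
    (hid : ∀ i : ℕ, 1 ≤ i → IdentDistrib (Λ i) (Λ 1) Pr Pr)
    (μmean : ℝ) (hμpos : 0 < μmean)
    (hμ : ∫ ω, (Λ 1 ω : ℝ) ∂Pr = μmean)
    (θ B : ℝ) (hθ : 0 < θ)
    (hexp : ∀ i, ∫⁻ ω, ENNReal.ofReal (Real.exp (θ * Λ i ω)) ∂Pr ≤ ENNReal.ofReal B) :
    ∀ q : ℝ, 1 ≤ q → ∃ C : ℝ, ∀ n : ℕ, 1 ≤ n →
      ∫⁻ ω, ((((sInf {k : ℕ | 1 ≤ k ∧ n < ∑ i ∈ Finset.range k, Λ i ω} + 1 : ℕ) : ℤ)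
              - Int.floor ((n : ℝ) / μmean)).natAbs : ℝ≥0∞) ^ q ∂Pr
        ≤ ENNReal.ofReal (C * (n : ℝ) ^ (q / 2)) := by
  intro q hq
  obtain ⟨c, C₀, hc0, hC₀1, htail⟩ :=
    renewal_tail_bound Pr Λ hmeas hindep hid μmean hμpos hμ θ B hθ hexp
  have hq0 : 0 < q := lt_of_lt_of_le one_pos hq
  refine ⟨C₀ * q * Real.Gamma q / c ^ q, fun n hn => ?_⟩
  have hs1 : (1:ℝ) ≤ Real.sqrt n := by
    rw [show (1:ℝ) = Real.sqrt 1 by simp]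
    exact Real.sqrt_le_sqrt (by exact_mod_cast hn)
  have hs0 : (0:ℝ) < Real.sqrt n := lt_of_lt_of_le one_pos hs1
  set s := Real.sqrt n with hsdef
  set m := ⌊(n:ℝ)/μmean⌋ with hm
  -- the real-valued deviation
  set f : Ω → ℝ := fun ω => ((((renewalN Λ n ω + 1 : ℕ) : ℤ) - m).natAbs : ℝ) with hf
  have hfnn : ∀ ω, 0 ≤ f ω := fun ω => Nat.cast_nonneg _
  have hfm : Measurable f :=
    measurable_nat_fun (measurable_renewalN Λ n hmeas)
      (fun j => ((((j + 1 : ℕ) : ℤ) - m).natAbs : ℝ))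
  -- rewrite the integrand
  have hint_eq : ∫⁻ ω, ((((sInf {k : ℕ | 1 ≤ k ∧ n < ∑ i ∈ Finset.range k, Λ i ω} + 1 : ℕ) : ℤ)
        - m).natAbs : ℝ≥0∞) ^ q ∂Pr =
      ∫⁻ ω, ENNReal.ofReal ((∫ t in (0:ℝ)..(f ω), q * t ^ (q - 1))) ∂Pr := by
    apply lintegral_congr
    intro ω
    have h1 : ∫ t in (0:ℝ)..(f ω), q * t ^ (q - 1) = f ω ^ q := by
      rw [intervalIntegral.integral_const_mul, integral_rpow (Or.inl (by linarith))]
      rw [sub_add_cancel, Real.zero_rpow hq0.ne', sub_zero]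
      field_simp
    rw [h1]
    rw [← ENNReal.ofReal_rpow_of_nonneg (hfnn ω) hq0.le]
    congr 1
    rw [hf]
    exact (ENNReal.ofReal_natCast _).symm
  rw [hint_eq]
  -- layer cake
  have hg_intble : ∀ t > (0:ℝ), IntervalIntegrable (fun t => q * t ^ (q - 1)) volume 0 t :=
    fun t _ => (intervalIntegral.intervalIntegrable_rpow' (by linarith)).const_mul q
  have hg_nn : ∀ᵐ t ∂(volume.restrict (Ioi (0:ℝ))), 0 ≤ q * t ^ (q - 1) := by
    filter_upwards [ae_restrict_mem measurableSet_Ioi] with t ht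
    have : (0:ℝ) < t := ht
    positivity
  rw [lintegral_comp_eq_lintegral_meas_le_mul Pr (ae_of_all _ hfnn) hfm.aemeasurable
    hg_intble hg_nn]
  -- bound the tail measures
  have htail' : ∀ t : ℝ, 0 < t → Pr {a | t ≤ f a} ≤
      ENNReal.ofReal (C₀ * Real.exp (-(c * t) / s)) := by
    intro t ht
    have hset : {a | t ≤ f a} =
        {ω | (⌈t⌉₊ : ℕ) ≤ ((((renewalN Λ n ω + 1 : ℕ) : ℤ) - m).natAbs : ℕ)} := by
      ext ω
      simp only [mem_setOf_eq, hf]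
      rw [← Nat.ceil_le]
    rw [hset]
    refine (htail n hn ⌈t⌉₊).trans (ENNReal.ofReal_le_ofReal ?_)
    have h1 : t ≤ (⌈t⌉₊ : ℝ) := Nat.le_ceil t
    have h2 : -(c * (⌈t⌉₊:ℝ)) / s ≤ -(c * t) / s := by
      have hnum : -(c * (⌈t⌉₊:ℝ)) ≤ -(c * t) := by nlinarith [h1, hc0.le]
      gcongr
    have h3 : Real.exp (-(c * (⌈t⌉₊:ℝ)) / s) ≤ Real.exp (-(c * t) / s) := Real.exp_le_exp.2 h2
    nlinarith [h3, Real.exp_pos (-(c * (⌈t⌉₊:ℝ)) / s), hC₀1]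
  calc ∫⁻ t in Ioi (0:ℝ), Pr {a | t ≤ f a} * ENNReal.ofReal (q * t ^ (q - 1))
      ≤ ∫⁻ t in Ioi (0:ℝ),
          ENNReal.ofReal (C₀ * Real.exp (-(c * t) / s) * (q * t ^ (q - 1))) := by
        apply setLIntegral_mono
        · apply ENNReal.measurable_ofReal.comp
          apply Measurable.mul
          · exact measurable_const.mul (((measurable_const.mul measurable_id).neg.div_const s).exp)
          · exact measurable_const.mul (by fun_prop : Measurable fun t : ℝ => t ^ (q - 1))
        · intro t ht
          calc Pr {a | t ≤ f a} * ENNReal.ofReal (q * t ^ (q - 1))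
              ≤ ENNReal.ofReal (C₀ * Real.exp (-(c * t) / s)) *
                ENNReal.ofReal (q * t ^ (q - 1)) := mul_le_mul_left (htail' t ht) _
          _ = ENNReal.ofReal (C₀ * Real.exp (-(c * t) / s) * (q * t ^ (q - 1))) :=
              (ENNReal.ofReal_mul (by positivity)).symm
  _ = ENNReal.ofReal (∫ t in Ioi (0:ℝ), C₀ * Real.exp (-(c * t) / s) * (q * t ^ (q - 1))) := by
        rw [ofReal_integral_eq_lintegral_ofReal]
        · -- integrability
          have hbase := integrableOn_rpow_mul_exp_neg_mul_rpow (p := 1) (s := q - 1)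
            (b := c / s) (by linarith) one_pos (by positivity)
          have hbase' : IntegrableOn
              (fun x : ℝ => x ^ (q - 1) * Real.exp (-(c * x) / s)) (Ioi 0) := by
            have heq : (fun x : ℝ => x ^ (q - 1) * Real.exp (-(c * x) / s)) =
                fun x : ℝ => x ^ (q - 1) * Real.exp (-(c / s) * x ^ (1:ℝ)) := by
              funext x
              rw [Real.rpow_one]
              congr 1
              ring
            rw [heq]
            exact hbase
          have heq2 : (fun t : ℝ => C₀ * Real.exp (-(c * t) / s) * (q * t ^ (q - 1))) =
              fun t : ℝ => (C₀ * q) * (t ^ (q - 1) * Real.exp (-(c * t) / s)) := by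
            funext t; ring
          rw [heq2]
          exact hbase'.const_mul _
        · filter_upwards [ae_restrict_mem measurableSet_Ioi] with t ht
          have : (0:ℝ) < t := ht
          positivity
  _ ≤ ENNReal.ofReal (C₀ * q * Real.Gamma q / c ^ q * (n:ℝ) ^ (q / 2)) := by
        apply ENNReal.ofReal_le_ofReal
        have heq2 : (fun t : ℝ => C₀ * Real.exp (-(c * t) / s) * (q * t ^ (q - 1))) =
            fun t : ℝ => (C₀ * q) * (t ^ (q - 1) * Real.exp (-(c / s * t))) := by
          funext t
          have : -(c * t) / s = -(c / s * t) := by ring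
          rw [this]
          ring
        rw [heq2, integral_const_mul,
          integral_rpow_mul_exp_neg_mul_Ioi hq0 (by positivity : 0 < c / s)]
        have h1 : (1 / (c / s)) ^ q = s ^ q / c ^ q := by
          rw [one_div, ← div_rpow hs0.le hc0.le]
          congr 1
          field_simp
        have h2 : s ^ q = (n:ℝ) ^ (q / 2) := by
          rw [hsdef, Real.sqrt_eq_rpow, ← Real.rpow_mul (Nat.cast_nonneg n)]
          congr 1
          ring
        rw [h1, h2]
        ring_nf
        apply le_of_eq
        ring
end
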